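/- arXiv:1405.6767 — 3 statements merged into one kernel-verified Lean document; each statement's English description precedes it below -/
import Mathlib

section
/- The map ψ: H⊗H → H⊗H defined by ψ(a⊗c) = α²(a₂₁) ⊗ (B(a₂₂)α⁻²(c))·A(S⁻¹(a₁)) satisfies the multiplicativity axiom of a monoidal Hom-entwining structure: writing ψ(a⊗c) = _ψa ⊗ c^ψ, one has _ψ(ab)⊗c^ψ = _φa·_ψb ⊗ α(α⁻¹(c)^{ψφ}) for all a,b,c ∈ H. -/
open TensorProduct

/-- A monoidal Hom-Hopf algebra (with bijective antipode) over a field `k`. -/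
structure HomHopf (k : Type*) [Field k] (H : Type*) [AddCommGroup H] [Module k H] where
  mul : H →ₗ[k] H →ₗ[k] H
  one : H
  a : H ≃ₗ[k] H
  comul : H →ₗ[k] H ⊗[k] H
  counit : H →ₗ[k] k
  S : H ≃ₗ[k] H
  hom_assoc : ∀ x y z : H, mul (a x) (mul y z) = mul (mul x y) (a z)
  a_mul : ∀ x y : H, a (mul x y) = mul (a x) (a y)
  mul_one' : ∀ x : H, mul x one = a x
  one_mul' : ∀ x : H, mul one x = a x
  a_one : a one = one
  hom_coassoc : (TensorProduct.map a.symm.toLinearMap comul).comp comul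
      = (TensorProduct.assoc k H H H).toLinearMap.comp
          ((TensorProduct.map comul a.symm.toLinearMap).comp comul)
  comul_a : ∀ x : H, comul (a x) = TensorProduct.map a.toLinearMap a.toLinearMap (comul x)
  counit_comul : ∀ x : H,
    (TensorProduct.lid k H) ((TensorProduct.map counit LinearMap.id) (comul x)) = a.symm x
  comul_counit : ∀ x : H,
    (TensorProduct.rid k H) ((TensorProduct.map LinearMap.id counit) (comul x)) = a.symm x
  counit_a : ∀ x : H, counit (a x) = counit x
  comul_mul : ∀ x y : H, comul (mul x y)
      = (TensorProduct.map (TensorProduct.lift mul) (TensorProduct.lift mul))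
          ((TensorProduct.tensorTensorTensorComm k H H H H) (comul x ⊗ₜ[k] comul y))
  comul_one : comul one = one ⊗ₜ[k] one
  counit_mul : ∀ x y : H, counit (mul x y) = counit x * counit y
  counit_one : counit one = 1
  S_a : ∀ x : H, S (a x) = a (S x)
  antipode_left : ∀ x : H,
    (TensorProduct.lift mul) ((TensorProduct.map S.toLinearMap LinearMap.id) (comul x))
      = counit x • one
  antipode_right : ∀ x : H,
    (TensorProduct.lift mul) ((TensorProduct.map LinearMap.id S.toLinearMap) (comul x))
      = counit x • one

/-- A monoidal Hom-Hopf algebra automorphism. -/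
structure IsHomHopfAuto {k : Type*} [Field k] {H : Type*} [AddCommGroup H] [Module k H]
    (HH : HomHopf k H) (f : H ≃ₗ[k] H) : Prop where
  map_mul : ∀ x y : H, f (HH.mul x y) = HH.mul (f x) (f y)
  map_one : f HH.one = HH.one
  map_comul : ∀ x : H, HH.comul (f x)
      = TensorProduct.map f.toLinearMap f.toLinearMap (HH.comul x)
  map_counit : ∀ x : H, HH.counit (f x) = HH.counit x
  map_a : ∀ x : H, f (HH.a x) = HH.a (f x)

/-- A left-right (A,B)-Yetter-Drinfeld Hom-module over `HH`. -/
structure YDModule {k : Type*} [Field k] {H : Type*} [AddCommGroup H] [Module k H]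
    (HH : HomHopf k H) (A B : H ≃ₗ[k] H)
    (M : Type*) [AddCommGroup M] [Module k M] where
  act : H →ₗ[k] M →ₗ[k] M
  coact : M →ₗ[k] M ⊗[k] H
  mu : M ≃ₗ[k] M
  hom_act : ∀ (h g : H) (m : M), act (HH.a h) (act g m) = act (HH.mul h g) (mu m)
  mu_act : ∀ (h : H) (m : M), mu (act h m) = act (HH.a h) (mu m)
  one_act : ∀ m : M, act HH.one m = mu m
  hom_coact : (TensorProduct.map mu.symm.toLinearMap HH.comul).comp coact
      = (TensorProduct.assoc k M H H).toLinearMap.comp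
          ((TensorProduct.map coact HH.a.symm.toLinearMap).comp coact)
  coact_mu : ∀ m : M, coact (mu m)
      = TensorProduct.map mu.toLinearMap HH.a.toLinearMap (coact m)
  coact_counit : ∀ m : M,
    (TensorProduct.rid k M) ((TensorProduct.map LinearMap.id HH.counit) (coact m)) = mu.symm m
  compat : ∀ (h : H) (m : M) (n : ℕ) (h1 h2 : Fin n → H),
      HH.comul h = ∑ i, h1 i ⊗ₜ[k] h2 i →
      ∀ (p : ℕ) (h21 h22 : Fin n → Fin p → H),
      (∀ i, HH.comul (h2 i) = ∑ j, h21 i j ⊗ₜ[k] h22 i j) →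
      ∀ (q : ℕ) (m0 : Fin q → M) (m1 : Fin q → H),
      coact m = ∑ l, m0 l ⊗ₜ[k] m1 l →
      coact (act h m) = ∑ i, ∑ j, ∑ l,
        act (HH.a (h21 i j)) (m0 l) ⊗ₜ[k]
          HH.mul (HH.mul (B (h22 i j)) (HH.a.symm (m1 l))) (A (HH.S.symm (h1 i)))


section Helpers

variable {k : Type*} [Field k] {H : Type*} [AddCommGroup H] [Module k H]

/-- Any element of a tensor product is a finite sum of simple tensors, `Fin`-indexed. -/
theorem hh_exists_fin (t : H ⊗[k] H) :
    ∃ (n : ℕ) (f g : Fin n → H), t = ∑ i, f i ⊗ₜ[k] g i := by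
  obtain ⟨S, hS⟩ := TensorProduct.exists_finset t
  refine ⟨S.card, fun i => ((S.equivFin.symm i : S) : H × H).1,
    fun i => ((S.equivFin.symm i : S) : H × H).2, ?_⟩
  rw [hS, ← Finset.sum_coe_sort S (fun i => i.1 ⊗ₜ[k] i.2)]
  exact (Fintype.sum_equiv S.equivFin.symm _ _ (fun i => rfl)).symm

/-- A family of tensors admits simultaneous decompositions of uniform length. -/
theorem hh_exists_fin_family {n : ℕ} (t : Fin n → H ⊗[k] H) :
    ∃ (p : ℕ) (f g : Fin n → Fin p → H), ∀ i, t i = ∑ j, f i j ⊗ₜ[k] g i j := by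
  choose p f g h using fun i => hh_exists_fin (t i)
  set P := Finset.univ.sup p with hP
  have hle : ∀ i, p i ≤ P := fun i => Finset.le_sup (Finset.mem_univ i)
  refine ⟨P, fun i j => if h : (j : ℕ) < p i then f i ⟨j, h⟩ else 0,
    fun i j => if h : (j : ℕ) < p i then g i ⟨j, h⟩ else 0, fun i => ?_⟩
  rw [h i]
  set u : ℕ → H ⊗[k] H :=
    (fun j => if h : j < p i then f i ⟨j, h⟩ ⊗ₜ[k] g i ⟨j, h⟩ else 0) with hu
  have key : ∀ (j : Fin P),
      (if h : (j : ℕ) < p i then f i ⟨j, h⟩ else 0) ⊗ₜ[k]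
        (if h : (j : ℕ) < p i then g i ⟨j, h⟩ else 0) = u (j : ℕ) := by
    intro j
    by_cases h : (j : ℕ) < p i
    · simp [hu, h]
    · simp [hu, h]
  calc ∑ j : Fin (p i), f i j ⊗ₜ[k] g i j
      = ∑ j : Fin (p i), u (j : ℕ) := by
        refine Finset.sum_congr rfl fun j _ => ?_
        simp [hu, j.isLt]
    _ = ∑ j ∈ Finset.range (p i), u j := Fin.sum_univ_eq_sum_range u (p i)
    _ = ∑ j ∈ Finset.range P, u j := by
        refine Finset.sum_subset (Finset.range_subset_range.2 (hle i)) fun x _ hx => ?_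
        simp only [hu]
        exact dif_neg (by simpa using hx)
    _ = ∑ j : Fin P, u (j : ℕ) := (Fin.sum_univ_eq_sum_range u P).symm
    _ = _ := Finset.sum_congr rfl fun j _ => (key j).symm


theorem hh_reindex1 {β : Type*} [AddCommMonoid β] {n1 m1 : ℕ} (f : Fin n1 → Fin m1 → β) :
    ∑ i, ∑ j, f i j
      = ∑ r : Fin (n1 * m1), f (finProdFinEquiv.symm r).1 (finProdFinEquiv.symm r).2 := by
  symm
  exact (Fintype.sum_equiv (finProdFinEquiv.symm : Fin (n1 * m1) ≃ Fin n1 × Fin m1)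
    _ (fun pr => f pr.1 pr.2) (fun r => rfl)).trans (Fintype.sum_prod_type _)

theorem hh_reindex2 {β : Type*} [AddCommMonoid β] {n1 m1 p1 q1 : ℕ}
    (f : Fin n1 → Fin m1 → Fin p1 → Fin q1 → β) :
    ∑ r : Fin (n1 * m1), ∑ s : Fin (p1 * q1),
        f (finProdFinEquiv.symm r).1 (finProdFinEquiv.symm r).2
          (finProdFinEquiv.symm s).1 (finProdFinEquiv.symm s).2
      = ∑ i, ∑ kk, ∑ j, ∑ l, f i kk j l := by
  refine Eq.trans (Fintype.sum_equiv (finProdFinEquiv.symm : Fin (n1 * m1) ≃ Fin n1 × Fin m1)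
    _ (fun pr => ∑ s : Fin (p1 * q1),
      f pr.1 pr.2 (finProdFinEquiv.symm s).1 (finProdFinEquiv.symm s).2) (fun r => rfl)) ?_
  refine Eq.trans (Fintype.sum_prod_type _) ?_
  refine Finset.sum_congr rfl fun i _ => Finset.sum_congr rfl fun kk _ => ?_
  exact (Fintype.sum_equiv (finProdFinEquiv.symm : Fin (p1 * q1) ≃ Fin p1 × Fin q1)
    _ (fun ps => f i kk ps.1 ps.2) (fun s => rfl)).trans (Fintype.sum_prod_type _)

end Helpers

section HopfHelpers

open TensorProduct

variable {k : Type*} [Field k] {H : Type*} [AddCommGroup H] [Module k H] (HH : HomHopf k H)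

theorem hh_a_symm_mul (x y : H) :
    HH.a.symm (HH.mul x y) = HH.mul (HH.a.symm x) (HH.a.symm y) := by
  apply HH.a.injective
  rw [HH.a_mul]
  simp

theorem hh_S_symm_a (x : H) : HH.S.symm (HH.a x) = HH.a (HH.S.symm x) := by
  apply HH.S.injective
  rw [HH.S.apply_symm_apply, HH.S_a, HH.S.apply_symm_apply]

theorem hh_S_a_symm (x : H) : HH.S (HH.a.symm x) = HH.a.symm (HH.S x) := by
  apply HH.a.injective
  rw [← HH.S_a, HH.a.apply_symm_apply, HH.a.apply_symm_apply]

theorem hh_comul_mul_pt (x y : H) {n m : ℕ} (x1 x2 : Fin n → H) (y1 y2 : Fin m → H)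
    (hx : HH.comul x = ∑ i, x1 i ⊗ₜ[k] x2 i) (hy : HH.comul y = ∑ i, y1 i ⊗ₜ[k] y2 i) :
    HH.comul (HH.mul x y)
      = ∑ i, ∑ j, HH.mul (x1 i) (y1 j) ⊗ₜ[k] HH.mul (x2 i) (y2 j) := by
  rw [HH.comul_mul, hx, hy]
  simp [TensorProduct.sum_tmul, TensorProduct.tmul_sum, TensorProduct.tensorTensorTensorComm_tmul,
    TensorProduct.map_tmul, TensorProduct.lift.tmul, map_sum]
  rw [Finset.sum_comm]

theorem hh_counit_right_pt (x : H) {n : ℕ} (x1 x2 : Fin n → H)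
    (hx : HH.comul x = ∑ i, x1 i ⊗ₜ[k] x2 i) :
    ∑ i, HH.counit (x2 i) • x1 i = HH.a.symm x := by
  have h := HH.comul_counit x
  rw [hx] at h
  simpa [TensorProduct.map_tmul, TensorProduct.rid_tmul, map_sum] using h

theorem hh_counit_left_pt (x : H) {n : ℕ} (x1 x2 : Fin n → H)
    (hx : HH.comul x = ∑ i, x1 i ⊗ₜ[k] x2 i) :
    ∑ i, HH.counit (x1 i) • x2 i = HH.a.symm x := by
  have h := HH.counit_comul x
  rw [hx] at h
  simpa [TensorProduct.map_tmul, TensorProduct.lid_tmul, map_sum] using h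

theorem hh_antipode_left_pt (x : H) {n : ℕ} (x1 x2 : Fin n → H)
    (hx : HH.comul x = ∑ i, x1 i ⊗ₜ[k] x2 i) :
    ∑ i, HH.mul (HH.S (x1 i)) (x2 i) = HH.counit x • HH.one := by
  have h := HH.antipode_left x
  rw [hx] at h
  simpa [TensorProduct.map_tmul, TensorProduct.lift.tmul, map_sum] using h

theorem hh_antipode_right_pt (x : H) {n : ℕ} (x1 x2 : Fin n → H)
    (hx : HH.comul x = ∑ i, x1 i ⊗ₜ[k] x2 i) :
    ∑ i, HH.mul (x1 i) (HH.S (x2 i)) = HH.counit x • HH.one := by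
  have h := HH.antipode_right x
  rw [hx] at h
  simpa [TensorProduct.map_tmul, TensorProduct.lift.tmul, map_sum] using h

theorem hh_a_symm_one : HH.a.symm HH.one = HH.one := by
  apply HH.a.injective
  rw [HH.a.apply_symm_apply, HH.a_one]

/-- Regrouping: (ab)(cd) = (a·α⁻¹(bc))·(αd). -/
theorem hh_regroup (a b c d : H) :
    HH.mul (HH.mul a b) (HH.mul c d)
      = HH.mul (HH.mul a (HH.a.symm (HH.mul b c))) (HH.a d) := by
  calc HH.mul (HH.mul a b) (HH.mul c d)
      = HH.mul (HH.a (HH.a.symm (HH.mul a b))) (HH.mul c d) := by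
        rw [HH.a.apply_symm_apply]
    _ = HH.mul (HH.mul (HH.a.symm (HH.mul a b)) c) (HH.a d) := HH.hom_assoc _ c d
    _ = HH.mul (HH.mul (HH.mul (HH.a.symm a) (HH.a.symm b)) (HH.a (HH.a.symm c)))
          (HH.a d) := by rw [hh_a_symm_mul, HH.a.apply_symm_apply]
    _ = HH.mul (HH.mul (HH.a (HH.a.symm a)) (HH.mul (HH.a.symm b) (HH.a.symm c)))
          (HH.a d) := by rw [HH.hom_assoc]
    _ = HH.mul (HH.mul a (HH.a.symm (HH.mul b c))) (HH.a d) := by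
        rw [HH.a.apply_symm_apply, ← hh_a_symm_mul]

theorem hh_claim2 (x y : H) {n m : ℕ} (x1 x2 : Fin n → H) (y1 y2 : Fin m → H)
    (hx : HH.comul x = ∑ i, x1 i ⊗ₜ[k] x2 i) (hy : HH.comul y = ∑ i, y1 i ⊗ₜ[k] y2 i) :
    ∑ i, ∑ j, HH.mul (HH.mul (x1 i) (y1 j)) (HH.mul (HH.S (y2 j)) (HH.S (x2 i)))
      = (HH.counit x * HH.counit y) • HH.one := by
  have e1 : ∀ i : Fin n,
      ∑ j, HH.mul (HH.mul (x1 i) (y1 j)) (HH.mul (HH.S (y2 j)) (HH.S (x2 i)))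
        = HH.counit y • HH.a (HH.mul (x1 i) (HH.S (x2 i))) := by
    intro i
    have : ∀ j, HH.mul (HH.mul (x1 i) (y1 j)) (HH.mul (HH.S (y2 j)) (HH.S (x2 i)))
        = ((HH.mul.flip (HH.a (HH.S (x2 i)))).comp
            ((HH.mul (x1 i)).comp HH.a.symm.toLinearMap))
            (HH.mul (y1 j) (HH.S (y2 j))) := fun j => hh_regroup HH _ _ _ _
    rw [Finset.sum_congr rfl fun j _ => this j, ← map_sum,
      hh_antipode_right_pt HH y y1 y2 hy]
    simp [HH.mul_one', hh_a_symm_one, ← HH.a_mul]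
  rw [Finset.sum_congr rfl fun i _ => e1 i, ← Finset.smul_sum, ← map_sum,
    hh_antipode_right_pt HH x x1 x2 hx]
  simp [smul_smul, mul_comm, HH.a_one]

theorem hh_claim1 (x y : H) {n m : ℕ} (x1 x2 : Fin n → H) (y1 y2 : Fin m → H)
    (hx : HH.comul x = ∑ i, x1 i ⊗ₜ[k] x2 i) (hy : HH.comul y = ∑ i, y1 i ⊗ₜ[k] y2 i) :
    ∑ i, ∑ j, HH.mul (HH.S (HH.mul (x1 i) (y1 j))) (HH.mul (x2 i) (y2 j))
      = (HH.counit x * HH.counit y) • HH.one := by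
  have hc := hh_comul_mul_pt HH x y x1 x2 y1 y2 hx hy
  have h := HH.antipode_left (HH.mul x y)
  rw [hc] at h
  simpa [TensorProduct.map_tmul, TensorProduct.lift.tmul, map_sum, HH.counit_mul] using h

theorem hh_coassoc_pt (x : H) {n p q : ℕ} (x1 x2 : Fin n → H)
    (x11 x12 : Fin n → Fin p → H) (x21 x22 : Fin n → Fin q → H)
    (hx : HH.comul x = ∑ i, x1 i ⊗ₜ[k] x2 i)
    (h1 : ∀ i, HH.comul (x1 i) = ∑ j, x11 i j ⊗ₜ[k] x12 i j)
    (h2 : ∀ i, HH.comul (x2 i) = ∑ j, x21 i j ⊗ₜ[k] x22 i j) :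
    ∑ i, ∑ j, x1 i ⊗ₜ[k] (x21 i j ⊗ₜ[k] x22 i j)
      = ∑ i, ∑ j, HH.a (x11 i j) ⊗ₜ[k] (x12 i j ⊗ₜ[k] HH.a.symm (x2 i)) := by
  have h0 := LinearMap.congr_fun HH.hom_coassoc x
  simp only [LinearMap.comp_apply, LinearEquiv.coe_coe] at h0
  rw [hx] at h0
  simp only [map_sum, TensorProduct.map_tmul, LinearEquiv.coe_coe] at h0
  simp only [h1, h2, TensorProduct.tmul_sum, TensorProduct.sum_tmul, map_sum,
    TensorProduct.assoc_tmul] at h0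
  have h3 := congrArg
    (TensorProduct.map HH.a.toLinearMap (LinearMap.id : H ⊗[k] H →ₗ[k] H ⊗[k] H)) h0
  simpa [map_sum, TensorProduct.map_tmul] using h3


theorem hh_step2 (HH : HomHopf k H) (p q v r s : H) :
    HH.mul (HH.S (HH.mul (HH.a p) (HH.a q)))
        (HH.mul v (HH.mul (HH.S (HH.a.symm r)) (HH.S (HH.a.symm s))))
      = HH.mul (HH.mul (HH.S (HH.mul p q)) v) (HH.mul (HH.S r) (HH.S s)) := by
  rw [← HH.a_mul, HH.S_a, hh_S_a_symm, hh_S_a_symm, ← hh_a_symm_mul,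
    HH.hom_assoc, HH.a.apply_symm_apply]

theorem hh_S_mul (HH : HomHopf k H) (a b : H) :
    HH.S (HH.mul a b) = HH.mul (HH.S b) (HH.S a) := by
  obtain ⟨na, a1, a2, ha⟩ := hh_exists_fin (HH.comul a)
  obtain ⟨pa, a11, a12, ha1⟩ := hh_exists_fin_family (fun i => HH.comul (a1 i))
  obtain ⟨qa, a21, a22, ha2⟩ := hh_exists_fin_family (fun i => HH.comul (a2 i))
  obtain ⟨nb, b1, b2, hb⟩ := hh_exists_fin (HH.comul b)
  obtain ⟨pb, b11, b12, hb1⟩ := hh_exists_fin_family (fun i => HH.comul (b1 i))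
  obtain ⟨qb, b21, b22, hb2⟩ := hh_exists_fin_family (fun i => HH.comul (b2 i))
  set mu : H ⊗[k] H →ₗ[k] H := TensorProduct.lift HH.mul with hmu
  set Phi : (H ⊗[k] (H ⊗[k] H)) ⊗[k] (H ⊗[k] (H ⊗[k] H)) →ₗ[k] H :=
    mu ∘ₗ (TensorProduct.map (HH.S.toLinearMap ∘ₗ mu)
        (mu ∘ₗ TensorProduct.map mu
          (mu ∘ₗ (TensorProduct.map HH.S.toLinearMap HH.S.toLinearMap) ∘ₗ
            (TensorProduct.comm k H H).toLinearMap))) ∘ₗ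
      (TensorProduct.map (LinearMap.id)
        (TensorProduct.tensorTensorTensorComm k H H H H).toLinearMap) ∘ₗ
      (TensorProduct.tensorTensorTensorComm k H (H ⊗[k] H) H (H ⊗[k] H)).toLinearMap
      with hPhi
  have Phi_tmul : ∀ (u yy zz x' y' z' : H),
      Phi ((u ⊗ₜ[k] (yy ⊗ₜ[k] zz)) ⊗ₜ[k] (x' ⊗ₜ[k] (y' ⊗ₜ[k] z')))
        = HH.mul (HH.S (HH.mul u x'))
            (HH.mul (HH.mul yy y') (HH.mul (HH.S z') (HH.S zz))) := by
    intro u yy zz x' y' z'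
    simp [hPhi, hmu, TensorProduct.tensorTensorTensorComm_tmul]
  have Ta := hh_coassoc_pt HH a a1 a2 a11 a12 a21 a22 ha ha1 ha2
  have Tb := hh_coassoc_pt HH b b1 b2 b11 b12 b21 b22 hb hb1 hb2
  have E1 : Phi ((∑ i, ∑ j, a1 i ⊗ₜ[k] (a21 i j ⊗ₜ[k] a22 i j)) ⊗ₜ[k]
      (∑ i, ∑ j, b1 i ⊗ₜ[k] (b21 i j ⊗ₜ[k] b22 i j))) = HH.S (HH.mul a b) := by
    simp only [TensorProduct.sum_tmul, TensorProduct.tmul_sum, map_sum, Phi_tmul]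
    rw [Finset.sum_congr rfl (fun kk _ => Finset.sum_comm)]
    rw [Finset.sum_congr rfl (fun kk _ => Finset.sum_congr rfl (fun i _ => Finset.sum_comm))]
    have inner : ∀ (kk : Fin nb) (i : Fin na),
        (∑ j : Fin qa, ∑ ll : Fin qb,
          (HH.mul (HH.S (HH.mul (a1 i) (b1 kk))))
            (HH.mul (HH.mul (a21 i j) (b21 kk ll)) (HH.mul (HH.S (b22 kk ll)) (HH.S (a22 i j)))))
          = HH.a (HH.S (HH.mul (HH.counit (a2 i) • a1 i) (HH.counit (b2 kk) • b1 kk))) := by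
      intro kk i
      calc ∑ j : Fin qa, ∑ ll : Fin qb,
            (HH.mul (HH.S (HH.mul (a1 i) (b1 kk))))
              (HH.mul (HH.mul (a21 i j) (b21 kk ll)) (HH.mul (HH.S (b22 kk ll)) (HH.S (a22 i j))))
          = (HH.mul (HH.S (HH.mul (a1 i) (b1 kk))))
              (∑ j : Fin qa, ∑ ll : Fin qb,
                HH.mul (HH.mul (a21 i j) (b21 kk ll)) (HH.mul (HH.S (b22 kk ll)) (HH.S (a22 i j)))) := by
            rw [map_sum]
            exact Finset.sum_congr rfl fun j _ => (map_sum _ _ _).symm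
        _ = (HH.mul (HH.S (HH.mul (a1 i) (b1 kk))))
              ((HH.counit (a2 i) * HH.counit (b2 kk)) • HH.one) := by
            rw [hh_claim2 HH (a2 i) (b2 kk) (a21 i) (a22 i) (b21 kk) (b22 kk) (ha2 i) (hb2 kk)]
        _ = HH.a (HH.S (HH.mul (HH.counit (a2 i) • a1 i) (HH.counit (b2 kk) • b1 kk))) := by
            simp [map_smul, LinearMap.smul_apply, smul_smul, HH.mul_one', mul_comm]
    rw [Finset.sum_congr rfl fun kk _ => Finset.sum_congr rfl fun i _ => inner kk i]
    have collapse : ∑ kk : Fin nb, ∑ i : Fin na,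
        HH.a (HH.S (HH.mul (HH.counit (a2 i) • a1 i) (HH.counit (b2 kk) • b1 kk)))
        = HH.a (HH.S (HH.mul (∑ i, HH.counit (a2 i) • a1 i)
            (∑ kk, HH.counit (b2 kk) • b1 kk))) := by
      symm
      simp only [map_sum, LinearMap.coe_sum, Finset.sum_apply]
    rw [collapse, hh_counit_right_pt HH a a1 a2 ha, hh_counit_right_pt HH b b1 b2 hb,
      ← hh_a_symm_mul, hh_S_a_symm, HH.a.apply_symm_apply]
  have E2 : Phi ((∑ i, ∑ j, HH.a (a11 i j) ⊗ₜ[k] (a12 i j ⊗ₜ[k] HH.a.symm (a2 i))) ⊗ₜ[k]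
      (∑ i, ∑ j, HH.a (b11 i j) ⊗ₜ[k] (b12 i j ⊗ₜ[k] HH.a.symm (b2 i))))
      = HH.mul (HH.S b) (HH.S a) := by
    simp only [TensorProduct.sum_tmul, TensorProduct.tmul_sum, map_sum, Phi_tmul]
    have step : ∀ (kk : Fin nb) (ll : Fin pb) (i : Fin na) (j : Fin pa),
        (HH.mul (HH.S (HH.mul (HH.a (a11 i j)) (HH.a (b11 kk ll)))))
            (HH.mul (HH.mul (a12 i j) (b12 kk ll))
              (HH.mul (HH.S (HH.a.symm (b2 kk))) (HH.S (HH.a.symm (a2 i)))))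
          = (HH.mul.flip (HH.mul (HH.S (b2 kk)) (HH.S (a2 i))))
              (HH.mul (HH.S (HH.mul (a11 i j) (b11 kk ll))) (HH.mul (a12 i j) (b12 kk ll))) :=
      fun kk ll i j => hh_step2 HH _ _ _ _ _
    rw [Finset.sum_congr rfl fun kk _ => Finset.sum_congr rfl fun ll _ =>
      Finset.sum_congr rfl fun i _ => Finset.sum_congr rfl fun j _ => step kk ll i j]
    have inner : ∀ (kk : Fin nb) (i : Fin na),
        (∑ j : Fin pa, ∑ ll : Fin pb,
          (HH.mul.flip (HH.mul (HH.S (b2 kk)) (HH.S (a2 i))))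
            (HH.mul (HH.S (HH.mul (a11 i j) (b11 kk ll))) (HH.mul (a12 i j) (b12 kk ll))))
          = HH.a (HH.mul (HH.S (HH.counit (b1 kk) • b2 kk)) (HH.S (HH.counit (a1 i) • a2 i))) := by
      intro kk i
      calc ∑ j : Fin pa, ∑ ll : Fin pb,
            (HH.mul.flip (HH.mul (HH.S (b2 kk)) (HH.S (a2 i))))
              (HH.mul (HH.S (HH.mul (a11 i j) (b11 kk ll))) (HH.mul (a12 i j) (b12 kk ll)))
          = (HH.mul.flip (HH.mul (HH.S (b2 kk)) (HH.S (a2 i))))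
              (∑ j : Fin pa, ∑ ll : Fin pb,
                HH.mul (HH.S (HH.mul (a11 i j) (b11 kk ll))) (HH.mul (a12 i j) (b12 kk ll))) := by
            rw [map_sum]
            exact Finset.sum_congr rfl fun j _ => (map_sum _ _ _).symm
        _ = (HH.mul.flip (HH.mul (HH.S (b2 kk)) (HH.S (a2 i))))
              ((HH.counit (a1 i) * HH.counit (b1 kk)) • HH.one) := by
            rw [hh_claim1 HH (a1 i) (b1 kk) (a11 i) (a12 i) (b11 kk) (b12 kk) (ha1 i) (hb1 kk)]
        _ = HH.a (HH.mul (HH.S (HH.counit (b1 kk) • b2 kk)) (HH.S (HH.counit (a1 i) • a2 i))) := by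
            simp [map_smul, LinearMap.smul_apply, smul_smul, HH.one_mul', mul_comm]
    refine Eq.trans (Finset.sum_congr rfl fun kk _ =>
      Finset.sum_comm.trans (Finset.sum_congr rfl fun i _ => Finset.sum_comm)) ?_
    refine Eq.trans (Finset.sum_congr rfl fun kk _ =>
      Finset.sum_congr rfl fun i _ => inner kk i) ?_
    have collapse : ∑ kk : Fin nb, ∑ i : Fin na,
        HH.a (HH.mul (HH.S (HH.counit (b1 kk) • b2 kk)) (HH.S (HH.counit (a1 i) • a2 i)))
        = HH.a (HH.mul (HH.S (∑ kk, HH.counit (b1 kk) • b2 kk))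
            (HH.S (∑ i, HH.counit (a1 i) • a2 i))) := by
      symm
      simp only [map_sum, LinearMap.coe_sum, Finset.sum_apply]
      exact Finset.sum_comm
    rw [collapse, hh_counit_left_pt HH b b1 b2 hb, hh_counit_left_pt HH a a1 a2 ha,
      hh_S_a_symm, hh_S_a_symm, ← hh_a_symm_mul, HH.a.apply_symm_apply]
  rw [← E1, Ta, Tb, E2]

theorem hh_S_symm_mul' (HH : HomHopf k H) (x y : H) :
    HH.S.symm (HH.mul x y) = HH.mul (HH.S.symm y) (HH.S.symm x) := by
  apply HH.S.injective
  rw [HH.S.apply_symm_apply, hh_S_mul, HH.S.apply_symm_apply, HH.S.apply_symm_apply]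


theorem hh_hom_lemma (HH : HomHopf k H) (X Y Cc P Q : H) :
    HH.mul (HH.mul (HH.mul X Y) (HH.a.symm (HH.a.symm Cc))) (HH.mul Q P)
      = HH.a (HH.mul (HH.mul X (HH.a.symm (HH.a.symm
          (HH.mul (HH.mul Y (HH.a.symm (HH.a.symm (HH.a.symm Cc)))) Q)))) P) := by
  have e1 : HH.mul (HH.mul (HH.mul X Y) (HH.a.symm (HH.a.symm Cc))) (HH.mul Q P)
      = HH.mul (HH.mul (HH.mul (HH.mul (HH.a.symm X) (HH.a.symm Y))
          (HH.a.symm (HH.a.symm (HH.a.symm Cc)))) Q) (HH.a P) := by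
    conv_lhs => rw [← HH.a.apply_symm_apply (HH.mul (HH.mul X Y) (HH.a.symm (HH.a.symm Cc)))]
    rw [HH.hom_assoc, hh_a_symm_mul, hh_a_symm_mul]
  rw [e1, HH.a_mul, HH.a_mul, HH.a.apply_symm_apply, hh_a_symm_mul, hh_a_symm_mul,
    HH.hom_assoc X (HH.mul (HH.a.symm Y)
      (HH.a.symm (HH.a.symm (HH.a.symm (HH.a.symm Cc))))) (HH.a.symm Q),
    HH.a.apply_symm_apply]
  conv_rhs => rw [← HH.a.apply_symm_apply X]
  rw [HH.hom_assoc (HH.a.symm X) (HH.a.symm Y)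
      (HH.a.symm (HH.a.symm (HH.a.symm (HH.a.symm Cc)))),
    HH.a.apply_symm_apply]

end HopfHelpers
/-- The map ψ(a⊗c) = α²(a₂₁) ⊗ (B(a₂₂)α⁻²(c))·A(S⁻¹(a₁)) satisfies the
multiplicativity axiom (2.3) of a monoidal Hom-entwining structure:
_ψ(ab)⊗c^ψ = _φa·_ψb ⊗ α(α⁻¹(c)^{ψφ}). -/
theorem stmt_6 {k : Type*} [Field k] {H : Type*} [AddCommGroup H] [Module k H]
    (HH : HomHopf k H) (A B : H ≃ₗ[k] H)
    (hA : IsHomHopfAuto HH A) (hB : IsHomHopfAuto HH B)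
    (psi : H ⊗[k] H →ₗ[k] H ⊗[k] H)
    (hpsi : ∀ (x c : H) (n : ℕ) (x1 x2 : Fin n → H),
      HH.comul x = ∑ i, x1 i ⊗ₜ[k] x2 i →
      ∀ (p : ℕ) (x21 x22 : Fin n → Fin p → H),
      (∀ i, HH.comul (x2 i) = ∑ j, x21 i j ⊗ₜ[k] x22 i j) →
      psi (x ⊗ₜ[k] c) = ∑ i, ∑ j,
        HH.a (HH.a (x21 i j)) ⊗ₜ[k]
          HH.mul (HH.mul (B (x22 i j)) (HH.a.symm (HH.a.symm c))) (A (HH.S.symm (x1 i)))) :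
    ∀ (x y c : H) (n : ℕ) (u v : Fin n → H),
      psi (y ⊗ₜ[k] HH.a.symm c) = ∑ i, u i ⊗ₜ[k] v i →
      ∀ (p : ℕ) (w z : Fin n → Fin p → H),
      (∀ i, psi (x ⊗ₜ[k] v i) = ∑ j, w i j ⊗ₜ[k] z i j) →
      psi (HH.mul x y ⊗ₜ[k] c) = ∑ i, ∑ j, HH.mul (w i j) (u i) ⊗ₜ[k] HH.a (z i j) := by
  intro x y c n u v hu p w z hw
  classical
  -- the linear map  u ⊗ (w ⊗ z) ↦ (w·u) ⊗ α z
  set L : H ⊗[k] (H ⊗[k] H) →ₗ[k] H ⊗[k] H :=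
    (TensorProduct.map (TensorProduct.lift HH.mul.flip) HH.a.toLinearMap) ∘ₗ
      (TensorProduct.assoc k H H H).symm.toLinearMap with hL
  have L_tmul : ∀ (u' w' z' : H),
      L (u' ⊗ₜ[k] (w' ⊗ₜ[k] z')) = HH.mul w' u' ⊗ₜ[k] HH.a z' := by
    intro u' w' z'
    simp [hL]
  set F : H ⊗[k] H →ₗ[k] H ⊗[k] H :=
    L ∘ₗ (LinearMap.lTensor H (psi ∘ₗ TensorProduct.mk k H H x)) with hF
  have F_tmul : ∀ (u' v' : H), F (u' ⊗ₜ[k] v') = L (u' ⊗ₜ[k] psi (x ⊗ₜ[k] v')) := by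
    intro u' v'
    simp [hF]
  have hRHS : (∑ i, ∑ j, HH.mul (w i j) (u i) ⊗ₜ[k] HH.a (z i j))
      = F (psi (y ⊗ₜ[k] HH.a.symm c)) := by
    rw [hu, map_sum]
    refine Finset.sum_congr rfl fun i _ => ?_
    rw [F_tmul, hw i, TensorProduct.tmul_sum, map_sum]
    exact Finset.sum_congr rfl fun j _ => (L_tmul _ _ _).symm
  obtain ⟨m, y1, y2, hy⟩ := hh_exists_fin (HH.comul y)
  obtain ⟨q, y21, y22, hy2⟩ := hh_exists_fin_family (fun i => HH.comul (y2 i))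
  obtain ⟨n', x1, x2, hx⟩ := hh_exists_fin (HH.comul x)
  obtain ⟨p', x21, x22, hx2⟩ := hh_exists_fin_family (fun i => HH.comul (x2 i))
  have hpsy := hpsi y (HH.a.symm c) m y1 y2 hy q y21 y22 hy2
  have hRHS2 : F (psi (y ⊗ₜ[k] HH.a.symm c)) = ∑ kk : Fin m, ∑ l : Fin q, ∑ i : Fin n', ∑ j : Fin p',
      HH.mul (HH.a (HH.a (x21 i j))) (HH.a (HH.a (y21 kk l))) ⊗ₜ[k]
        HH.a (HH.mul (HH.mul (B (x22 i j)) (HH.a.symm (HH.a.symm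
          (HH.mul (HH.mul (B (y22 kk l)) (HH.a.symm (HH.a.symm (HH.a.symm c))))
            (A (HH.S.symm (y1 kk)))))))
          (A (HH.S.symm (x1 i)))) := by
    rw [hpsy]
    simp only [map_sum]
    refine Finset.sum_congr rfl fun kk _ => Finset.sum_congr rfl fun l _ => ?_
    rw [F_tmul, hpsi x _ n' x1 x2 hx p' x21 x22 hx2]
    simp only [TensorProduct.tmul_sum, map_sum]
    exact Finset.sum_congr rfl fun i _ => Finset.sum_congr rfl fun j _ => L_tmul _ _ _
  set e1 : Fin n' × Fin m ≃ Fin (n' * m) := finProdFinEquiv with he1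
  set e2 : Fin p' × Fin q ≃ Fin (p' * q) := finProdFinEquiv with he2
  have hcm : HH.comul (HH.mul x y) = ∑ r : Fin (n' * m),
      HH.mul (x1 (e1.symm r).1) (y1 (e1.symm r).2) ⊗ₜ[k]
        HH.mul (x2 (e1.symm r).1) (y2 (e1.symm r).2) := by
    rw [hh_comul_mul_pt HH x y x1 x2 y1 y2 hx hy]
    exact hh_reindex1 (fun i j => HH.mul (x1 i) (y1 j) ⊗ₜ[k] HH.mul (x2 i) (y2 j))
  have hcm2 : ∀ r : Fin (n' * m), HH.comul (HH.mul (x2 (e1.symm r).1) (y2 (e1.symm r).2))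
      = ∑ s : Fin (p' * q),
        HH.mul (x21 (e1.symm r).1 (e2.symm s).1) (y21 (e1.symm r).2 (e2.symm s).2) ⊗ₜ[k]
          HH.mul (x22 (e1.symm r).1 (e2.symm s).1) (y22 (e1.symm r).2 (e2.symm s).2) := by
    intro r
    rw [hh_comul_mul_pt HH _ _ (x21 (e1.symm r).1) (x22 (e1.symm r).1)
      (y21 (e1.symm r).2) (y22 (e1.symm r).2) (hx2 (e1.symm r).1) (hy2 (e1.symm r).2)]
    exact hh_reindex1 (fun j l =>
      HH.mul (x21 (e1.symm r).1 j) (y21 (e1.symm r).2 l) ⊗ₜ[k]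
        HH.mul (x22 (e1.symm r).1 j) (y22 (e1.symm r).2 l))
  have hPL := hpsi (HH.mul x y) c (n' * m) _ _ hcm (p' * q) _ _ hcm2
  rw [hPL, hRHS, hRHS2]
  -- reindex the left-hand side
  have term_eq : ∀ (i : Fin n') (kk : Fin m) (j : Fin p') (l : Fin q),
      HH.a (HH.a (HH.mul (x21 i j) (y21 kk l))) ⊗ₜ[k]
        HH.mul (HH.mul (B (HH.mul (x22 i j) (y22 kk l))) (HH.a.symm (HH.a.symm c)))
          (A (HH.S.symm (HH.mul (x1 i) (y1 kk))))
      = HH.mul (HH.a (HH.a (x21 i j))) (HH.a (HH.a (y21 kk l))) ⊗ₜ[k]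
        HH.a (HH.mul (HH.mul (B (x22 i j)) (HH.a.symm (HH.a.symm
          (HH.mul (HH.mul (B (y22 kk l)) (HH.a.symm (HH.a.symm (HH.a.symm c))))
            (A (HH.S.symm (y1 kk)))))))
          (A (HH.S.symm (x1 i)))) := by
    intro i kk j l
    congr 1
    · rw [HH.a_mul, HH.a_mul]
    · rw [hB.map_mul, hh_S_symm_mul', hA.map_mul]
      exact hh_hom_lemma HH (B (x22 i j)) (B (y22 kk l)) c
        (A (HH.S.symm (x1 i))) (A (HH.S.symm (y1 kk)))
  calc ∑ r : Fin (n' * m), ∑ s : Fin (p' * q),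
        HH.a (HH.a (HH.mul (x21 (e1.symm r).1 (e2.symm s).1) (y21 (e1.symm r).2 (e2.symm s).2))) ⊗ₜ[k]
          HH.mul (HH.mul (B (HH.mul (x22 (e1.symm r).1 (e2.symm s).1) (y22 (e1.symm r).2 (e2.symm s).2)))
              (HH.a.symm (HH.a.symm c)))
            (A (HH.S.symm (HH.mul (x1 (e1.symm r).1) (y1 (e1.symm r).2))))
      = ∑ i : Fin n', ∑ kk : Fin m, ∑ j : Fin p', ∑ l : Fin q,
          HH.a (HH.a (HH.mul (x21 i j) (y21 kk l))) ⊗ₜ[k]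
            HH.mul (HH.mul (B (HH.mul (x22 i j) (y22 kk l))) (HH.a.symm (HH.a.symm c)))
              (A (HH.S.symm (HH.mul (x1 i) (y1 kk)))) := by
        exact hh_reindex2 (fun i kk j l =>
          HH.a (HH.a (HH.mul (x21 i j) (y21 kk l))) ⊗ₜ[k]
            HH.mul (HH.mul (B (HH.mul (x22 i j) (y22 kk l))) (HH.a.symm (HH.a.symm c)))
              (A (HH.S.symm (HH.mul (x1 i) (y1 kk)))))
    _ = ∑ kk : Fin m, ∑ l : Fin q, ∑ i : Fin n', ∑ j : Fin p',
          HH.a (HH.a (HH.mul (x21 i j) (y21 kk l))) ⊗ₜ[k]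
            HH.mul (HH.mul (B (HH.mul (x22 i j) (y22 kk l))) (HH.a.symm (HH.a.symm c)))
              (A (HH.S.symm (HH.mul (x1 i) (y1 kk)))) := by
        rw [Finset.sum_comm]
        refine Finset.sum_congr rfl fun kk _ => ?_
        refine (Finset.sum_congr rfl fun i _ => Finset.sum_comm).trans Finset.sum_comm
    _ = ∑ kk : Fin m, ∑ l : Fin q, ∑ i : Fin n', ∑ j : Fin p',
          HH.mul (HH.a (HH.a (x21 i j))) (HH.a (HH.a (y21 kk l))) ⊗ₜ[k]
            HH.a (HH.mul (HH.mul (B (x22 i j)) (HH.a.symm (HH.a.symm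
              (HH.mul (HH.mul (B (y22 kk l)) (HH.a.symm (HH.a.symm (HH.a.symm c))))
                (A (HH.S.symm (y1 kk)))))))
              (A (HH.S.symm (x1 i)))) :=
        Finset.sum_congr rfl fun kk _ => Finset.sum_congr rfl fun l _ =>
          Finset.sum_congr rfl fun i _ => Finset.sum_congr rfl fun j _ => term_eq i kk j l
end

section
/- The map ψ: H⊗H → H⊗H, ψ(a⊗c) = α²(a₂₁) ⊗ (B(a₂₂)α⁻²(c))·A(S⁻¹(a₁)), satisfies the comultiplicativity axiom: _ψa ⊗ Δ(c^ψ) = α(_{φψ}α⁻¹(a)) ⊗ (c₁^φ ⊗ c₂^ψ), where legs of ψ and φ (both equal to ψ) are composed as indicated. -/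
open TensorProduct

section HomHopfAux
variable {k : Type*} [Field k] {H : Type*} [AddCommGroup H] [Module k H]

section auxdecomp
variable {M N : Type*} [AddCommGroup M] [Module k M] [AddCommGroup N] [Module k N]

theorem myexists_fin (x : M ⊗[k] N) : ∃ (n : ℕ) (f : Fin n → M) (g : Fin n → N),
    x = ∑ i, f i ⊗ₜ[k] g i := by
  obtain ⟨s, hs⟩ := TensorProduct.exists_finset x
  refine ⟨s.card, fun i => ((s.equivFin.symm i : {p // p ∈ s}) : M × N).1,
    fun i => ((s.equivFin.symm i : {p // p ∈ s}) : M × N).2, ?_⟩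
  rw [hs, ← Finset.sum_attach s (fun p => p.1 ⊗ₜ[k] p.2)]
  exact (Equiv.sum_comp s.equivFin.symm (fun p : {p // p ∈ s} => (p : M × N).1 ⊗ₜ[k] (p : M × N).2)).symm

theorem fam_decomp {ι : Type*} [Fintype ι] (t : ι → M ⊗[k] N) :
    ∃ (p : ℕ) (f : ι → Fin p → M) (g : ι → Fin p → N),
      ∀ i, t i = ∑ j, f i j ⊗ₜ[k] g i j := by
  choose n f g h using fun i => myexists_fin (t i)
  classical
  refine ⟨Finset.univ.sup n, fun i j => if hj : (j : ℕ) < n i then f i ⟨j, hj⟩ else 0,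
    fun i j => if hj : (j : ℕ) < n i then g i ⟨j, hj⟩ else 0, fun i => ?_⟩
  have hn : n i ≤ Finset.univ.sup n := Finset.le_sup (Finset.mem_univ i)
  set F : ℕ → M ⊗[k] N := fun jn => if hj : jn < n i then f i ⟨jn, hj⟩ ⊗ₜ[k] g i ⟨jn, hj⟩ else 0
    with hF
  have h1 : ∀ j : Fin (Finset.univ.sup n),
      (if hj : (j : ℕ) < n i then f i ⟨j, hj⟩ else 0) ⊗ₜ[k]
        (if hj : (j : ℕ) < n i then g i ⟨j, hj⟩ else 0) = F (j : ℕ) := by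
    intro j; by_cases hj : (j : ℕ) < n i <;> simp [hF, hj]
  rw [h i, Finset.sum_congr rfl (fun j _ => h1 j), Fin.sum_univ_eq_sum_range F,
    ← Finset.sum_subset (Finset.range_subset_range.2 hn)
      (fun jn _ hjn => by simp [hF, Finset.mem_range.not.1 hjn]),
    ← Fin.sum_univ_eq_sum_range F]
  exact Finset.sum_congr rfl (fun j _ => by simp [hF, j.2])

end auxdecomp

namespace HomHopf
variable (HH : HomHopf k H)

noncomputable def mulT : H ⊗[k] H →ₗ[k] H := TensorProduct.lift HH.mul

@[simp] lemma mulT_tmul (x y : H) : HH.mulT (x ⊗ₜ[k] y) = HH.mul x y := rfl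

noncomputable def mul2 : (H ⊗[k] H) ⊗[k] (H ⊗[k] H) →ₗ[k] H ⊗[k] H :=
  (TensorProduct.map HH.mulT HH.mulT) ∘ₗ (TensorProduct.tensorTensorTensorComm k H H H H).toLinearMap

@[simp] lemma mul2_tmul (x y z w : H) :
    HH.mul2 ((x ⊗ₜ[k] y) ⊗ₜ[k] (z ⊗ₜ[k] w)) = HH.mul x z ⊗ₜ[k] HH.mul y w := rfl

lemma comul_mul' (x y : H) : HH.comul (HH.mul x y) = HH.mul2 (HH.comul x ⊗ₜ[k] HH.comul y) :=
  HH.comul_mul x y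


lemma map_equiv_cancel (e f : H ≃ₗ[k] H) (t : H ⊗[k] H) :
    TensorProduct.map e.symm.toLinearMap f.symm.toLinearMap
      (TensorProduct.map e.toLinearMap f.toLinearMap t) = t := by
  have h : (TensorProduct.map e.symm.toLinearMap f.symm.toLinearMap) ∘ₗ
      (TensorProduct.map e.toLinearMap f.toLinearMap) = LinearMap.id := by
    rw [← TensorProduct.map_comp]
    ext x y <;> simp
  exact congrFun (congrArg (fun g => g.toFun) h) t

lemma map_equiv_cancel' (e f : H ≃ₗ[k] H) (t : H ⊗[k] H) :
    TensorProduct.map e.toLinearMap f.toLinearMap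
      (TensorProduct.map e.symm.toLinearMap f.symm.toLinearMap t) = t := by
  have h : (TensorProduct.map e.toLinearMap f.toLinearMap) ∘ₗ
      (TensorProduct.map e.symm.toLinearMap f.symm.toLinearMap) = LinearMap.id := by
    rw [← TensorProduct.map_comp]
    ext x y <;> simp
  exact congrFun (congrArg (fun g => g.toFun) h) t

lemma comul_ainv (x : H) :
    HH.comul (HH.a.symm x)
      = TensorProduct.map HH.a.symm.toLinearMap HH.a.symm.toLinearMap (HH.comul x) := by
  have h := HH.comul_a (HH.a.symm x)
  rw [HH.a.apply_symm_apply] at h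
  rw [h, map_equiv_cancel]

/-- Hom-associativity for the componentwise product on `H ⊗ H`. -/
lemma mul2_assoc (u v w : H ⊗[k] H) :
    HH.mul2 (TensorProduct.map HH.a.toLinearMap HH.a.toLinearMap u ⊗ₜ[k] HH.mul2 (v ⊗ₜ[k] w))
      = HH.mul2 (HH.mul2 (u ⊗ₜ[k] v) ⊗ₜ[k] TensorProduct.map HH.a.toLinearMap HH.a.toLinearMap w) := by
  induction u using TensorProduct.induction_on with
  | zero => simp
  | add u1 u2 h1 h2 => simp only [map_add, TensorProduct.add_tmul, h1, h2]
  | tmul u1 u2 =>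
    induction v using TensorProduct.induction_on with
    | zero => simp
    | add v1 v2 h1 h2 =>
      simp only [TensorProduct.add_tmul, TensorProduct.tmul_add, map_add, h1, h2]
    | tmul v1 v2 =>
      induction w using TensorProduct.induction_on with
      | zero => simp
      | add w1 w2 h1 h2 =>
        simp only [TensorProduct.add_tmul, TensorProduct.tmul_add, map_add, h1, h2]
      | tmul w1 w2 => simp [HH.hom_assoc]

lemma mul2_one (w : H ⊗[k] H) :
    HH.mul2 ((HH.one ⊗ₜ[k] HH.one) ⊗ₜ[k] w)
      = TensorProduct.map HH.a.toLinearMap HH.a.toLinearMap w := by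
  induction w using TensorProduct.induction_on with
  | zero => simp
  | add w1 w2 h1 h2 => simp only [TensorProduct.tmul_add, map_add, h1, h2]
  | tmul w1 w2 => simp [HH.one_mul']

lemma mul2_one' (w : H ⊗[k] H) :
    HH.mul2 (w ⊗ₜ[k] (HH.one ⊗ₜ[k] HH.one))
      = TensorProduct.map HH.a.toLinearMap HH.a.toLinearMap w := by
  induction w using TensorProduct.induction_on with
  | zero => simp
  | add w1 w2 h1 h2 => simp only [TensorProduct.add_tmul, map_add, h1, h2]
  | tmul w1 w2 => simp [HH.mul_one']

/-- Family form of counit axiom (left). -/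
lemma counit_fam {n : ℕ} (z : H) (f g : Fin n → H)
    (hz : HH.comul z = ∑ i, f i ⊗ₜ[k] g i) :
    ∑ i, HH.counit (f i) • g i = HH.a.symm z := by
  have h := HH.counit_comul z
  rw [hz] at h
  simpa using h

/-- Family form of counit axiom (right). -/
lemma counit_fam' {n : ℕ} (z : H) (f g : Fin n → H)
    (hz : HH.comul z = ∑ i, f i ⊗ₜ[k] g i) :
    ∑ i, HH.counit (g i) • f i = HH.a.symm z := by
  have h := HH.comul_counit z
  rw [hz] at h
  simpa using h

/-- Family form of antipode axiom (left). -/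
lemma antipode_fam {n : ℕ} (z : H) (f g : Fin n → H)
    (hz : HH.comul z = ∑ i, f i ⊗ₜ[k] g i) :
    ∑ i, HH.mul (HH.S (f i)) (g i) = HH.counit z • HH.one := by
  have h := HH.antipode_left z
  rw [hz] at h
  simpa using h

/-- Family form of antipode axiom (right). -/
lemma antipode_fam' {n : ℕ} (z : H) (f g : Fin n → H)
    (hz : HH.comul z = ∑ i, f i ⊗ₜ[k] g i) :
    ∑ i, HH.mul (f i) (HH.S (g i)) = HH.counit z • HH.one := by
  have h := HH.antipode_right z
  rw [hz] at h
  simpa using h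

/-- Family form of hom-coassociativity. -/
lemma co_fam {n p q : ℕ} (z : H) (f g : Fin n → H)
    (hz : HH.comul z = ∑ i, f i ⊗ₜ[k] g i)
    (f1 f2 : Fin n → Fin p → H) (hf : ∀ i, HH.comul (f i) = ∑ j, f1 i j ⊗ₜ[k] f2 i j)
    (g1 g2 : Fin n → Fin q → H) (hg : ∀ i, HH.comul (g i) = ∑ j, g1 i j ⊗ₜ[k] g2 i j) :
    (∑ i, ∑ j, f1 i j ⊗ₜ[k] (f2 i j ⊗ₜ[k] HH.a.symm (g i)))
      = ∑ i, ∑ j, HH.a.symm (f i) ⊗ₜ[k] (g1 i j ⊗ₜ[k] g2 i j) := by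
  have h := LinearMap.congr_fun HH.hom_coassoc z
  simp only [LinearMap.comp_apply, LinearEquiv.coe_coe] at h
  rw [hz] at h
  simp only [map_sum] at h
  calc (∑ i, ∑ j, f1 i j ⊗ₜ[k] (f2 i j ⊗ₜ[k] HH.a.symm (g i)))
      = ∑ i, (TensorProduct.assoc k H H H)
          ((TensorProduct.map HH.comul HH.a.symm.toLinearMap) (f i ⊗ₜ[k] g i)) := by
        refine Finset.sum_congr rfl fun i _ => ?_
        simp [hf i, TensorProduct.sum_tmul, map_sum]
    _ = ∑ i, (TensorProduct.map HH.a.symm.toLinearMap HH.comul) (f i ⊗ₜ[k] g i) := h.symm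
    _ = ∑ i, ∑ j, HH.a.symm (f i) ⊗ₜ[k] (g1 i j ⊗ₜ[k] g2 i j) := by
        refine Finset.sum_congr rfl fun i _ => ?_
        simp [hg i, TensorProduct.tmul_sum]

lemma S_ainv (x : H) : HH.S (HH.a.symm x) = HH.a.symm (HH.S x) := by
  have := HH.S_a (HH.a.symm x)
  rw [HH.a.apply_symm_apply] at this
  rw [this, HH.a.symm_apply_apply]

lemma ainv_mul (x y : H) :
    HH.a.symm (HH.mul x y) = HH.mul (HH.a.symm x) (HH.a.symm y) := by
  have := HH.a_mul (HH.a.symm x) (HH.a.symm y)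
  rw [HH.a.apply_symm_apply, HH.a.apply_symm_apply] at this
  rw [← this, HH.a.symm_apply_apply]

lemma ainv_one : HH.a.symm HH.one = HH.one := by
  have h := congrArg HH.a.symm HH.a_one
  rw [HH.a.symm_apply_apply] at h
  exact h.symm

noncomputable def sconj : H →ₗ[k] H ⊗[k] H :=
  (TensorProduct.map HH.S.toLinearMap HH.S.toLinearMap) ∘ₗ
    (TensorProduct.comm k H H).toLinearMap ∘ₗ HH.comul

lemma sconj_fam {n : ℕ} (z : H) (f g : Fin n → H)
    (hz : HH.comul z = ∑ i, f i ⊗ₜ[k] g i) :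
    HH.sconj z = ∑ i, HH.S (g i) ⊗ₜ[k] HH.S (f i) := by
  simp [sconj, hz, map_sum]

noncomputable def conv (F G : H →ₗ[k] H ⊗[k] H) : H →ₗ[k] H ⊗[k] H :=
  HH.mul2 ∘ₗ (TensorProduct.map F G) ∘ₗ HH.comul

lemma conv_fam (F G : H →ₗ[k] H ⊗[k] H) {n : ℕ} (z : H) (f g : Fin n → H)
    (hz : HH.comul z = ∑ i, f i ⊗ₜ[k] g i) :
    HH.conv F G z = ∑ i, HH.mul2 (F (f i) ⊗ₜ[k] G (g i)) := by
  simp [conv, hz, map_sum]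

noncomputable def cunit : H →ₗ[k] H ⊗[k] H := HH.counit.smulRight (HH.one ⊗ₜ[k] HH.one)

@[simp] lemma cunit_apply (z : H) : HH.cunit z = HH.counit z • (HH.one ⊗ₜ[k] HH.one) := rfl

def Acompat (F : H →ₗ[k] H ⊗[k] H) : Prop :=
  ∀ h : H, F (HH.a h) = TensorProduct.map HH.a.toLinearMap HH.a.toLinearMap (F h)

lemma acompat_symm {F : H →ₗ[k] H ⊗[k] H} (hF : HH.Acompat F) (h : H) :
    F (HH.a.symm h) = TensorProduct.map HH.a.symm.toLinearMap HH.a.symm.toLinearMap (F h) := by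
  have := hF (HH.a.symm h)
  rw [HH.a.apply_symm_apply] at this
  rw [this, map_equiv_cancel]

lemma acompat_comul : HH.Acompat HH.comul := HH.comul_a

lemma acompat_sconj : HH.Acompat HH.sconj := by
  intro h
  simp only [sconj, LinearMap.comp_apply, HH.comul_a, LinearEquiv.coe_coe]
  rw [← TensorProduct.map_comm]
  rw [← LinearMap.comp_apply (TensorProduct.map _ _), ← TensorProduct.map_comp]
  rw [← LinearMap.comp_apply (TensorProduct.map _ _) (TensorProduct.map _ _), ← TensorProduct.map_comp]
  congr 2 <;> ext z <;> simp [HH.S_a]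

lemma acompat_comulS : HH.Acompat (HH.comul ∘ₗ HH.S.toLinearMap) := by
  intro h
  simp only [LinearMap.comp_apply, LinearEquiv.coe_toLinearMap, HH.S_a, HH.comul_a]

lemma acompat_cunit : HH.Acompat HH.cunit := by
  intro h
  simp [HH.counit_a, TensorProduct.tmul_smul, HH.a_one]

lemma conv_cunit_left {F : H →ₗ[k] H ⊗[k] H} (hF : HH.Acompat F) :
    HH.conv HH.cunit F = F := by
  ext h
  obtain ⟨n, f, g, hfg⟩ := myexists_fin (HH.comul h)
  rw [HH.conv_fam _ _ h f g hfg]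
  calc ∑ i, HH.mul2 (HH.cunit (f i) ⊗ₜ[k] F (g i))
      = ∑ i, HH.counit (f i) • TensorProduct.map HH.a.toLinearMap HH.a.toLinearMap (F (g i)) := by
        refine Finset.sum_congr rfl fun i _ => ?_
        rw [cunit_apply, ← TensorProduct.smul_tmul', map_smul, HH.mul2_one]
    _ = TensorProduct.map HH.a.toLinearMap HH.a.toLinearMap (F (∑ i, HH.counit (f i) • g i)) := by
        simp [map_sum]
    _ = F h := by
        rw [HH.counit_fam h f g hfg, HH.acompat_symm hF, map_equiv_cancel' HH.a HH.a]

lemma conv_cunit_right {F : H →ₗ[k] H ⊗[k] H} (hF : HH.Acompat F) :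
    HH.conv F HH.cunit = F := by
  ext h
  obtain ⟨n, f, g, hfg⟩ := myexists_fin (HH.comul h)
  rw [HH.conv_fam _ _ h f g hfg]
  calc ∑ i, HH.mul2 (F (f i) ⊗ₜ[k] HH.cunit (g i))
      = ∑ i, HH.counit (g i) • TensorProduct.map HH.a.toLinearMap HH.a.toLinearMap (F (f i)) := by
        refine Finset.sum_congr rfl fun i _ => ?_
        rw [cunit_apply, TensorProduct.tmul_smul, map_smul, HH.mul2_one']
    _ = TensorProduct.map HH.a.toLinearMap HH.a.toLinearMap (F (∑ i, HH.counit (g i) • f i)) := by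
        simp [map_sum]
    _ = F h := by
        rw [HH.counit_fam' h f g hfg, HH.acompat_symm hF, map_equiv_cancel' HH.a HH.a]

lemma conv_comulS_comul : HH.conv (HH.comul ∘ₗ HH.S.toLinearMap) HH.comul = HH.cunit := by
  ext h
  obtain ⟨n, f, g, hfg⟩ := myexists_fin (HH.comul h)
  rw [HH.conv_fam _ _ h f g hfg]
  calc ∑ i, HH.mul2 ((HH.comul ∘ₗ HH.S.toLinearMap) (f i) ⊗ₜ[k] HH.comul (g i))
      = ∑ i, HH.comul (HH.mul (HH.S (f i)) (g i)) := by
        refine Finset.sum_congr rfl fun i _ => ?_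
        rw [LinearMap.comp_apply, ← HH.comul_mul']; rfl
    _ = HH.comul (HH.counit h • HH.one) := by
        rw [← map_sum, HH.antipode_fam h f g hfg]
    _ = HH.cunit h := by
        rw [map_smul, HH.comul_one, cunit_apply]

lemma conv_assoc (F G K : H →ₗ[k] H ⊗[k] H) (hF : HH.Acompat F) (hK : HH.Acompat K) :
    HH.conv (HH.conv F G) K = HH.conv F (HH.conv G K) := by
  ext h
  obtain ⟨n, f, g, hfg⟩ := myexists_fin (HH.comul h)
  obtain ⟨p, f1, f2, hf⟩ := fam_decomp (fun i => HH.comul (f i))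
  obtain ⟨q, g1, g2, hg⟩ := fam_decomp (fun i => HH.comul (g i))
  set Λ : H ⊗[k] (H ⊗[k] H) →ₗ[k] H ⊗[k] H :=
    HH.mul2 ∘ₗ (TensorProduct.map
      ((TensorProduct.map HH.a.toLinearMap HH.a.toLinearMap) ∘ₗ F)
      (HH.mul2 ∘ₗ (TensorProduct.map G K))) with hΛ
  have key := congrArg Λ (HH.co_fam h f g hfg f1 f2 hf g1 g2 hg)
  simp only [hΛ, map_sum, LinearMap.comp_apply, TensorProduct.map_tmul] at key
  calc HH.conv (HH.conv F G) K h
      = ∑ i, ∑ j, HH.mul2 (HH.mul2 (F (f1 i j) ⊗ₜ[k] G (f2 i j)) ⊗ₜ[k] K (g i)) := by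
        rw [HH.conv_fam _ _ h f g hfg]
        refine Finset.sum_congr rfl fun i _ => ?_
        rw [HH.conv_fam _ _ (f i) (f1 i) (f2 i) (hf i), TensorProduct.sum_tmul, map_sum]
    _ = ∑ i, ∑ j, HH.mul2 (TensorProduct.map HH.a.toLinearMap HH.a.toLinearMap (F (f1 i j))
          ⊗ₜ[k] HH.mul2 (G (f2 i j) ⊗ₜ[k] K (HH.a.symm (g i)))) := by
        refine Finset.sum_congr rfl fun i _ => Finset.sum_congr rfl fun j _ => ?_
        have hKg : K (g i) = TensorProduct.map HH.a.toLinearMap HH.a.toLinearMap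
            (K (HH.a.symm (g i))) := by
          have := hK (HH.a.symm (g i))
          rw [HH.a.apply_symm_apply] at this
          exact this
        rw [hKg]
        exact (HH.mul2_assoc _ _ _).symm
    _ = ∑ i, ∑ j, HH.mul2 (TensorProduct.map HH.a.toLinearMap HH.a.toLinearMap (F (HH.a.symm (f i)))
          ⊗ₜ[k] HH.mul2 (G (g1 i j) ⊗ₜ[k] K (g2 i j))) := key
    _ = HH.conv F (HH.conv G K) h := by
        rw [HH.conv_fam _ _ h f g hfg]
        refine Finset.sum_congr rfl fun i _ => ?_
        rw [HH.conv_fam _ _ (g i) (g1 i) (g2 i) (hg i), TensorProduct.tmul_sum, map_sum]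
        refine Finset.sum_congr rfl fun j _ => ?_
        have hFf : F (f i) = TensorProduct.map HH.a.toLinearMap HH.a.toLinearMap
            (F (HH.a.symm (f i))) := by
          have := hF (HH.a.symm (f i))
          rw [HH.a.apply_symm_apply] at this
          exact this
        rw [hFf]

lemma conv_comul_sconj : HH.conv HH.comul HH.sconj = HH.cunit := by
  ext h
  obtain ⟨n, f, g, hfg⟩ := myexists_fin (HH.comul h)
  obtain ⟨p, f1, f2, hf⟩ := fam_decomp (fun i => HH.comul (f i))
  obtain ⟨q, g1, g2, hg⟩ := fam_decomp (fun i => HH.comul (g i))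
  obtain ⟨r, G11, G12, hG1⟩ := fam_decomp (fun ij : Fin n × Fin q => HH.comul (g1 ij.1 ij.2))
  obtain ⟨r', G21, G22, hG2⟩ := fam_decomp (fun ij : Fin n × Fin q => HH.comul (g2 ij.1 ij.2))
  -- the decorated transport map for step 1
  set aS : H →ₗ[k] H := HH.a.toLinearMap ∘ₗ HH.S.toLinearMap with haS
  set Λ₁ : H ⊗[k] (H ⊗[k] H) →ₗ[k] H ⊗[k] H :=
    HH.mul2 ∘ₗ (TensorProduct.assoc k H H (H ⊗[k] H)).symm.toLinearMap ∘ₗ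
      (TensorProduct.map LinearMap.id
        (TensorProduct.map LinearMap.id (HH.sconj ∘ₗ HH.a.toLinearMap))) with hΛ₁
  have hΛ₁app : ∀ u v w : H, Λ₁ (u ⊗ₜ[k] (v ⊗ₜ[k] w))
      = HH.mul2 ((u ⊗ₜ[k] v) ⊗ₜ[k] HH.sconj (HH.a w)) := by
    intro u v w
    simp [hΛ₁]
  have key1 := congrArg Λ₁ (HH.co_fam h f g hfg f1 f2 hf g1 g2 hg)
  simp only [map_sum, hΛ₁app, LinearEquiv.apply_symm_apply] at key1
  -- step 2 transport maps (one for each i)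
  have step2 : ∀ i, (∑ j, ∑ t, HH.mul (HH.a.symm (f i)) (aS (G22 (i, j) t))
        ⊗ₜ[k] HH.mul (g1 i j) (aS (G21 (i, j) t)))
      = ∑ j, ∑ u, HH.mul (HH.a.symm (f i)) (HH.S (g2 i j))
        ⊗ₜ[k] HH.mul (HH.a (G11 (i, j) u)) (aS (G12 (i, j) u)) := by
    intro i
    set Λ₂ : H ⊗[k] (H ⊗[k] H) →ₗ[k] H ⊗[k] H :=
      (TensorProduct.map ((HH.mul (HH.a.symm (f i))) ∘ₗ aS)
          (HH.mulT ∘ₗ (TensorProduct.map HH.a.toLinearMap aS) ∘ₗ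
            (TensorProduct.comm k H H).toLinearMap)) ∘ₗ
        (TensorProduct.assoc k H H H).toLinearMap ∘ₗ
        (TensorProduct.map (TensorProduct.comm k H H).toLinearMap LinearMap.id) ∘ₗ
        (TensorProduct.comm k H (H ⊗[k] H)).toLinearMap with hΛ₂
    have hΛ₂app : ∀ u v w : H, Λ₂ (u ⊗ₜ[k] (v ⊗ₜ[k] w))
        = HH.mul (HH.a.symm (f i)) (aS w) ⊗ₜ[k] HH.mul (HH.a u) (aS v) := by
      intro u v w
      simp [hΛ₂]
    have key2 := congrArg Λ₂ (HH.co_fam (g i) (g1 i) (g2 i) (hg i)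
      (fun j u => G11 (i, j) u) (fun j u => G12 (i, j) u) (fun j => hG1 (i, j))
      (fun j t => G21 (i, j) t) (fun j t => G22 (i, j) t) (fun j => hG2 (i, j)))
    simp only [map_sum, hΛ₂app] at key2
    calc (∑ j, ∑ t, HH.mul (HH.a.symm (f i)) (aS (G22 (i, j) t))
            ⊗ₜ[k] HH.mul (g1 i j) (aS (G21 (i, j) t)))
        = ∑ j, ∑ t, HH.mul (HH.a.symm (f i)) (aS (G22 (i, j) t))
            ⊗ₜ[k] HH.mul (HH.a (HH.a.symm (g1 i j))) (aS (G21 (i, j) t)) := by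
          simp [HH.a.apply_symm_apply]
      _ = ∑ j, ∑ u, HH.mul (HH.a.symm (f i)) (aS (HH.a.symm (g2 i j)))
            ⊗ₜ[k] HH.mul (HH.a (G11 (i, j) u)) (aS (G12 (i, j) u)) := key2.symm
      _ = ∑ j, ∑ u, HH.mul (HH.a.symm (f i)) (HH.S (g2 i j))
            ⊗ₜ[k] HH.mul (HH.a (G11 (i, j) u)) (aS (G12 (i, j) u)) := by
          refine Finset.sum_congr rfl fun j _ => Finset.sum_congr rfl fun u _ => ?_
          rw [haS]
          simp only [LinearMap.comp_apply, LinearEquiv.coe_toLinearMap]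
          rw [HH.S_ainv, HH.a.apply_symm_apply]
  -- assemble
  calc HH.conv HH.comul HH.sconj h
      = ∑ i, HH.mul2 (HH.comul (f i) ⊗ₜ[k] HH.sconj (g i)) := HH.conv_fam _ _ h f g hfg
    _ = ∑ i, ∑ j, HH.mul2 ((f1 i j ⊗ₜ[k] f2 i j) ⊗ₜ[k] HH.sconj (g i)) := by
        refine Finset.sum_congr rfl fun i _ => ?_
        rw [hf i, TensorProduct.sum_tmul, map_sum]
    _ = ∑ i, ∑ j, HH.mul2 ((HH.a.symm (f i) ⊗ₜ[k] g1 i j) ⊗ₜ[k] HH.sconj (HH.a (g2 i j))) := key1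
    _ = ∑ i, ∑ j', ∑ t, HH.mul (HH.a.symm (f i)) (aS (G22 (i, j') t))
          ⊗ₜ[k] HH.mul (g1 i j') (aS (G21 (i, j') t)) := by
        refine Finset.sum_congr rfl fun i _ => Finset.sum_congr rfl fun j _ => ?_
        rw [HH.acompat_sconj (g2 i j),
          HH.sconj_fam (g2 i j) (fun t => G21 (i, j) t) (fun t => G22 (i, j) t) (hG2 (i, j)),
          map_sum, TensorProduct.tmul_sum, map_sum]
        refine Finset.sum_congr rfl fun t _ => ?_
        simp [haS]
    _ = ∑ i, ∑ j, ∑ u, HH.mul (HH.a.symm (f i)) (HH.S (g2 i j))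
          ⊗ₜ[k] HH.mul (HH.a (G11 (i, j) u)) (aS (G12 (i, j) u)) :=
        Finset.sum_congr rfl fun i _ => step2 i
    _ = ∑ i, ∑ j, HH.counit (g1 i j) •
          (HH.mul (HH.a.symm (f i)) (HH.S (g2 i j)) ⊗ₜ[k] HH.one) := by
        refine Finset.sum_congr rfl fun i _ => Finset.sum_congr rfl fun j _ => ?_
        rw [← TensorProduct.tmul_sum]
        have inner : (∑ u, HH.mul (HH.a (G11 (i, j) u)) (aS (G12 (i, j) u)))
            = HH.counit (g1 i j) • HH.one := by
          have h1 : ∀ u : Fin r, HH.mul (HH.a (G11 (i, j) u)) (aS (G12 (i, j) u))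
              = HH.a (HH.mul (G11 (i, j) u) (HH.S (G12 (i, j) u))) := by
            intro u
            rw [haS]
            simp only [LinearMap.comp_apply, LinearEquiv.coe_toLinearMap]
            rw [HH.a_mul]
          rw [Finset.sum_congr rfl (fun u _ => h1 u), ← map_sum,
            HH.antipode_fam' (g1 i j) (fun u => G11 (i, j) u) (fun u => G12 (i, j) u)
              (hG1 (i, j)),
            map_smul, HH.a_one]
        rw [inner, TensorProduct.tmul_smul]
    _ = ∑ i, HH.mul (HH.a.symm (f i)) (HH.S (HH.a.symm (g i))) ⊗ₜ[k] HH.one := by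
        refine Finset.sum_congr rfl fun i _ => ?_
        set Φ : H →ₗ[k] H ⊗[k] H :=
          ((TensorProduct.mk k H H).flip HH.one) ∘ₗ (HH.mul (HH.a.symm (f i))) ∘ₗ
            HH.S.toLinearMap with hΦ
        have hΦapp : ∀ y : H, Φ y = HH.mul (HH.a.symm (f i)) (HH.S y) ⊗ₜ[k] HH.one := by
          intro y; simp [hΦ]
        calc (∑ j, HH.counit (g1 i j) •
              (HH.mul (HH.a.symm (f i)) (HH.S (g2 i j)) ⊗ₜ[k] HH.one))
            = Φ (∑ j, HH.counit (g1 i j) • g2 i j) := by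
              rw [map_sum]
              refine Finset.sum_congr rfl fun j _ => ?_
              rw [map_smul, hΦapp]
          _ = Φ (HH.a.symm (g i)) := by
              rw [HH.counit_fam (g i) (g1 i) (g2 i) (hg i)]
          _ = HH.mul (HH.a.symm (f i)) (HH.S (HH.a.symm (g i))) ⊗ₜ[k] HH.one := hΦapp _
    _ = HH.cunit h := by
        have h2 : ∀ i : Fin n, HH.mul (HH.a.symm (f i)) (HH.S (HH.a.symm (g i)))
            = HH.a.symm (HH.mul (f i) (HH.S (g i))) := by
          intro i
          rw [HH.S_ainv, ← HH.ainv_mul]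
        rw [Finset.sum_congr rfl (fun i _ => by rw [h2 i]), ← TensorProduct.sum_tmul,
          ← map_sum, HH.antipode_fam' h f g hfg, map_smul, HH.ainv_one, cunit_apply,
          TensorProduct.smul_tmul']

/-- The antipode is anti-comultiplicative. -/
lemma anti_comul : HH.comul ∘ₗ HH.S.toLinearMap = HH.sconj := by
  have step := HH.conv_assoc (HH.comul ∘ₗ HH.S.toLinearMap) HH.comul HH.sconj
    HH.acompat_comulS HH.acompat_sconj
  rw [HH.conv_comulS_comul, HH.conv_comul_sconj] at step
  rw [← HH.conv_cunit_right HH.acompat_comulS, ← step, HH.conv_cunit_left HH.acompat_sconj]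

lemma comul_S (x : H) : HH.comul (HH.S x)
    = TensorProduct.map HH.S.toLinearMap HH.S.toLinearMap
        ((TensorProduct.comm k H H) (HH.comul x)) :=
  LinearMap.congr_fun HH.anti_comul x

lemma comul_Sinv (x : H) : HH.comul (HH.S.symm x)
    = (TensorProduct.comm k H H).symm
        (TensorProduct.map HH.S.symm.toLinearMap HH.S.symm.toLinearMap (HH.comul x)) := by
  have h := HH.comul_S (HH.S.symm x)
  rw [HH.S.apply_symm_apply] at h
  have h2 := congrArg (TensorProduct.map HH.S.symm.toLinearMap HH.S.symm.toLinearMap) h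
  rw [map_equiv_cancel] at h2
  have h3 := congrArg (TensorProduct.comm k H H).symm h2
  rw [LinearEquiv.symm_apply_apply] at h3
  exact h3.symm

lemma comul_Sinv_fam {n : ℕ} (z : H) (f g : Fin n → H)
    (hz : HH.comul z = ∑ i, f i ⊗ₜ[k] g i) :
    HH.comul (HH.S.symm z) = ∑ i, HH.S.symm (g i) ⊗ₜ[k] HH.S.symm (f i) := by
  rw [HH.comul_Sinv, hz, map_sum, map_sum]
  refine Finset.sum_congr rfl fun i _ => ?_
  simp

noncomputable def psi0 (A B : H ≃ₗ[k] H) : H ⊗[k] H →ₗ[k] H ⊗[k] H :=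
  ((TensorProduct.map LinearMap.id
      (HH.mulT ∘ₗ TensorProduct.map LinearMap.id (A.toLinearMap ∘ₗ HH.S.symm.toLinearMap))) ∘ₗ
    (TensorProduct.assoc k H H H).toLinearMap ∘ₗ
    (TensorProduct.comm k H ((H ⊗[k] H))).toLinearMap ∘ₗ
    (TensorProduct.map LinearMap.id
      (TensorProduct.map (HH.a.toLinearMap ∘ₗ HH.a.toLinearMap)
        (HH.mulT ∘ₗ TensorProduct.map B.toLinearMap LinearMap.id))) ∘ₗ
    (TensorProduct.map LinearMap.id (TensorProduct.assoc k H H H).toLinearMap) ∘ₗ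
    (TensorProduct.assoc k H (H ⊗[k] H) H).toLinearMap) ∘ₗ
  (TensorProduct.map ((TensorProduct.map LinearMap.id HH.comul) ∘ₗ HH.comul)
    (HH.a.symm.toLinearMap ∘ₗ HH.a.symm.toLinearMap))

lemma psi0_fam (A B : H ≃ₗ[k] H) (x c : H) {n p : ℕ}
    (x1 x2 : Fin n → H) (hx : HH.comul x = ∑ i, x1 i ⊗ₜ[k] x2 i)
    (x21 x22 : Fin n → Fin p → H)
    (hx2 : ∀ i, HH.comul (x2 i) = ∑ j, x21 i j ⊗ₜ[k] x22 i j) :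
    HH.psi0 A B (x ⊗ₜ[k] c) = ∑ i, ∑ j,
      HH.a (HH.a (x21 i j)) ⊗ₜ[k]
        HH.mul (HH.mul (B (x22 i j)) (HH.a.symm (HH.a.symm c))) (A (HH.S.symm (x1 i))) := by
  simp only [psi0, LinearMap.comp_apply, TensorProduct.map_tmul, hx, map_sum,
    TensorProduct.sum_tmul, LinearMap.id_coe, id_eq]
  refine Finset.sum_congr rfl fun i _ => ?_
  simp only [hx2 i, map_sum, TensorProduct.sum_tmul, TensorProduct.tmul_sum,
    LinearEquiv.coe_coe, TensorProduct.assoc_tmul, TensorProduct.comm_tmul,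
    TensorProduct.map_tmul, LinearMap.comp_apply, LinearMap.id_coe, id_eq,
    mulT_tmul, LinearEquiv.coe_toLinearMap]

lemma main_identity (A B : H ≃ₗ[k] H) (hA : ∀ x : H, HH.comul (A x)
      = TensorProduct.map A.toLinearMap A.toLinearMap (HH.comul x))
    (hB : ∀ x : H, HH.comul (B x)
      = TensorProduct.map B.toLinearMap B.toLinearMap (HH.comul x))
    (x c : H) {m : ℕ} (c1 c2 : Fin m → H)
    (hc : HH.comul c = ∑ j, c1 j ⊗ₜ[k] c2 j) :
    TensorProduct.map LinearMap.id HH.comul (HH.psi0 A B (x ⊗ₜ[k] c))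
      = ∑ j', (TensorProduct.assoc k H H H)
          ((TensorProduct.map ((TensorProduct.map HH.a.toLinearMap LinearMap.id) ∘ₗ HH.psi0 A B)
            LinearMap.id)
            ((TensorProduct.assoc k H H H).symm
              ((TensorProduct.map LinearMap.id (TensorProduct.comm k H H).toLinearMap)
                ((TensorProduct.assoc k H H H)
                  (HH.psi0 A B (HH.a.symm x ⊗ₜ[k] c2 j') ⊗ₜ[k] c1 j'))))) := by
  classical
  -- families
  obtain ⟨n, x1, x2, hx⟩ := myexists_fin (HH.comul x)
  obtain ⟨pe, e1, e2, he⟩ := fam_decomp (fun i => HH.comul (x1 i))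
  obtain ⟨py, y1, y2, hy⟩ := fam_decomp (fun i => HH.comul (x2 i))
  obtain ⟨pg, g1, g2, hg⟩ := fam_decomp (fun ij : Fin n × Fin py => HH.comul (y1 ij.1 ij.2))
  obtain ⟨pz, z1, z2, hz⟩ := fam_decomp (fun ij : Fin n × Fin py => HH.comul (y2 ij.1 ij.2))
  obtain ⟨ph, h1, h2, hh⟩ :=
    fam_decomp (fun iju : (Fin n × Fin py) × Fin pg => HH.comul (g2 iju.1 iju.2))
  obtain ⟨pq, q1, q2, hq⟩ :=
    fam_decomp (fun ijs : (Fin n × Fin py) × Fin pz => HH.comul (z1 ijs.1 ijs.2))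
  obtain ⟨pw, w1, w2, hw⟩ :=
    fam_decomp (fun ijs : (Fin n × Fin py) × Fin pz => HH.comul (z2 ijs.1 ijs.2))
  -- abbreviations
  set AS : H →ₗ[k] H := A.toLinearMap ∘ₗ HH.S.symm.toLinearMap with hAS
  -- LHS expansion
  have hL1 : TensorProduct.map LinearMap.id HH.comul (HH.psi0 A B (x ⊗ₜ[k] c))
      = ∑ i, ∑ j, HH.a (HH.a (y1 i j)) ⊗ₜ[k]
          HH.comul (HH.mul (HH.mul (B (y2 i j)) (HH.a.symm (HH.a.symm c))) (AS (x1 i))) := by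
    rw [HH.psi0_fam A B x c x1 x2 hx (fun i j => y1 i j) (fun i j => y2 i j) hy, map_sum]
    refine Finset.sum_congr rfl fun i _ => ?_
    rw [map_sum]
    refine Finset.sum_congr rfl fun j _ => ?_
    simp [hAS]
  have hL2 : ∀ i j, HH.comul (HH.mul (HH.mul (B (y2 i j)) (HH.a.symm (HH.a.symm c))) (AS (x1 i)))
      = ∑ s, ∑ j', ∑ kk,
          HH.mul (HH.mul (B (z1 (i, j) s)) (HH.a.symm (HH.a.symm (c1 j'))))
              (AS (e2 i kk))
            ⊗ₜ[k]
          HH.mul (HH.mul (B (z2 (i, j) s)) (HH.a.symm (HH.a.symm (c2 j'))))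
              (AS (e1 i kk)) := by
    intro i j
    have hM : HH.comul (HH.mul (B (y2 i j)) (HH.a.symm (HH.a.symm c)))
        = ∑ s, ∑ j', HH.mul (B (z1 (i, j) s)) (HH.a.symm (HH.a.symm (c1 j')))
            ⊗ₜ[k] HH.mul (B (z2 (i, j) s)) (HH.a.symm (HH.a.symm (c2 j'))) := by
      rw [HH.comul_mul']
      have hBy : HH.comul (B (y2 i j)) = ∑ s, B (z1 (i, j) s) ⊗ₜ[k] B (z2 (i, j) s) := by
        rw [hB, hz (i, j), map_sum]; simp
      have hcc : HH.comul (HH.a.symm (HH.a.symm c))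
          = ∑ j', HH.a.symm (HH.a.symm (c1 j')) ⊗ₜ[k] HH.a.symm (HH.a.symm (c2 j')) := by
        rw [HH.comul_ainv, HH.comul_ainv, hc, map_sum, map_sum]; simp
      rw [hBy, hcc, TensorProduct.sum_tmul, map_sum]
      refine Finset.sum_congr rfl fun s _ => ?_
      rw [TensorProduct.tmul_sum, map_sum]
      refine Finset.sum_congr rfl fun j' _ => ?_
      rw [mul2_tmul]
    have hN : HH.comul (AS (x1 i))
        = ∑ kk, AS (e2 i kk) ⊗ₜ[k] AS (e1 i kk) := by
      rw [hAS]
      simp only [LinearMap.comp_apply, LinearEquiv.coe_toLinearMap]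
      rw [hA, HH.comul_Sinv_fam (x1 i) (e1 i) (e2 i) (he i), map_sum]
      simp
    rw [HH.comul_mul', hM, hN, TensorProduct.sum_tmul, map_sum]
    refine Finset.sum_congr rfl fun s _ => ?_
    rw [TensorProduct.sum_tmul, map_sum]
    refine Finset.sum_congr rfl fun j' _ => ?_
    rw [TensorProduct.tmul_sum, map_sum]
    refine Finset.sum_congr rfl fun kk _ => ?_
    rw [mul2_tmul]
  -- iterated-coproduct map
  set G' : H →ₗ[k] H ⊗[k] (H ⊗[k] H) := (TensorProduct.map LinearMap.id HH.comul) ∘ₗ HH.comul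
    with hG'
  -- E1 : five-leg coassociativity rearrangement
  have hPapp : ∀ u v w : H,
      ((TensorProduct.assoc k H H (H ⊗[k] (H ⊗[k] H))).symm.toLinearMap ∘ₗ
        TensorProduct.map LinearMap.id
          (TensorProduct.map LinearMap.id (G' ∘ₗ HH.a.toLinearMap)))
        (u ⊗ₜ[k] (v ⊗ₜ[k] w))
      = (u ⊗ₜ[k] v) ⊗ₜ[k] G' (HH.a w) := by
    intro u v w
    simp
  have E1 : (∑ i, ∑ kk, ∑ j, ∑ s,
        ((e1 i kk ⊗ₜ[k] e2 i kk) ⊗ₜ[k] (y1 i j ⊗ₜ[k] (z1 (i, j) s ⊗ₜ[k] z2 (i, j) s))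
          : (H ⊗[k] H) ⊗[k] (H ⊗[k] (H ⊗[k] H))))
      = ∑ i, ∑ j, ∑ s, ∑ t,
        (HH.a.symm (x1 i) ⊗ₜ[k] y1 i j) ⊗ₜ[k]
          (HH.a (z1 (i, j) s) ⊗ₜ[k] (HH.a (w1 ((i, j), s) t) ⊗ₜ[k] HH.a (w2 ((i, j), s) t))) := by
    have key := congrArg
      ((TensorProduct.assoc k H H (H ⊗[k] (H ⊗[k] H))).symm.toLinearMap ∘ₗ
        TensorProduct.map LinearMap.id
          (TensorProduct.map LinearMap.id (G' ∘ₗ HH.a.toLinearMap)))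
      (HH.co_fam x x1 x2 hx e1 e2 he (fun i j => y1 i j) (fun i j => y2 i j) hy)
    simp only [map_sum, hPapp, LinearEquiv.apply_symm_apply] at key
    have hG'x2 : ∀ i, G' (x2 i) = ∑ j, ∑ s, y1 i j ⊗ₜ[k] (z1 (i, j) s ⊗ₜ[k] z2 (i, j) s) := by
      intro i
      rw [hG', LinearMap.comp_apply, hy i, map_sum]
      refine Finset.sum_congr rfl fun j _ => ?_
      simp [hz (i, j), TensorProduct.tmul_sum]
    have hG'ay2 : ∀ i j, G' (HH.a (y2 i j)) = ∑ s, ∑ t,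
        HH.a (z1 (i, j) s) ⊗ₜ[k] (HH.a (w1 ((i, j), s) t) ⊗ₜ[k] HH.a (w2 ((i, j), s) t)) := by
      intro i j
      rw [hG', LinearMap.comp_apply, HH.comul_a, hz (i, j), map_sum, map_sum]
      refine Finset.sum_congr rfl fun s _ => ?_
      simp only [TensorProduct.map_tmul, LinearEquiv.coe_toLinearMap, TensorProduct.map_tmul,
        LinearMap.id_coe, id_eq]
      rw [HH.comul_a, hw ((i, j), s), map_sum]
      simp [TensorProduct.tmul_sum]
    calc (∑ i, ∑ kk, ∑ j, ∑ s,
          ((e1 i kk ⊗ₜ[k] e2 i kk) ⊗ₜ[k] (y1 i j ⊗ₜ[k] (z1 (i, j) s ⊗ₜ[k] z2 (i, j) s))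
            : (H ⊗[k] H) ⊗[k] (H ⊗[k] (H ⊗[k] H))))
        = ∑ i, ∑ kk, (e1 i kk ⊗ₜ[k] e2 i kk) ⊗ₜ[k] G' (x2 i) := by
          refine Finset.sum_congr rfl fun i _ => Finset.sum_congr rfl fun kk _ => ?_
          rw [hG'x2 i, TensorProduct.tmul_sum]
          refine Finset.sum_congr rfl fun j _ => ?_
          rw [TensorProduct.tmul_sum]
      _ = ∑ i, ∑ j, (HH.a.symm (x1 i) ⊗ₜ[k] y1 i j) ⊗ₜ[k] G' (HH.a (y2 i j)) := key
      _ = _ := by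
          refine Finset.sum_congr rfl fun i _ => Finset.sum_congr rfl fun j _ => ?_
          rw [hG'ay2 i j, TensorProduct.tmul_sum]
          refine Finset.sum_congr rfl fun s _ => ?_
          rw [TensorProduct.tmul_sum]
  -- F4 : four-leg coassociativity rearrangement (per i)
  have hNapp : ∀ u v w : H,
      (TensorProduct.map LinearMap.id
        ((TensorProduct.assoc k H H H).toLinearMap ∘ₗ
          TensorProduct.map HH.comul HH.a.toLinearMap)) (u ⊗ₜ[k] (v ⊗ₜ[k] w))
      = u ⊗ₜ[k] ((TensorProduct.assoc k H H H) (HH.comul v ⊗ₜ[k] HH.a w)) := by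
    intro u v w
    simp
  have F4 : ∀ i, (∑ j, ∑ u, ∑ v,
        (g1 (i, j) u ⊗ₜ[k] (h1 ((i, j), u) v ⊗ₜ[k] (h2 ((i, j), u) v ⊗ₜ[k] y2 i j))
          : H ⊗[k] (H ⊗[k] (H ⊗[k] H))))
      = ∑ j, ∑ s, ∑ t,
        HH.a.symm (y1 i j) ⊗ₜ[k]
          (HH.a.symm (z1 (i, j) s) ⊗ₜ[k]
            (w1 ((i, j), s) t ⊗ₜ[k] HH.a (HH.a (w2 ((i, j), s) t)))) := by
    intro i
    have key := congrArg
      (TensorProduct.map LinearMap.id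
        ((TensorProduct.assoc k H H H).toLinearMap ∘ₗ
          TensorProduct.map HH.comul HH.a.toLinearMap))
      (HH.co_fam (x2 i) (y1 i) (y2 i) (hy i)
        (fun j u => g1 (i, j) u) (fun j u => g2 (i, j) u) (fun j => hg (i, j))
        (fun j s => z1 (i, j) s) (fun j s => z2 (i, j) s) (fun j => hz (i, j)))
    simp only [map_sum, hNapp, LinearEquiv.apply_symm_apply] at key
    calc (∑ j, ∑ u, ∑ v,
          (g1 (i, j) u ⊗ₜ[k] (h1 ((i, j), u) v ⊗ₜ[k] (h2 ((i, j), u) v ⊗ₜ[k] y2 i j))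
            : H ⊗[k] (H ⊗[k] (H ⊗[k] H))))
        = ∑ j, ∑ u, g1 (i, j) u ⊗ₜ[k]
            ((TensorProduct.assoc k H H H) (HH.comul (g2 (i, j) u) ⊗ₜ[k] y2 i j)) := by
          refine Finset.sum_congr rfl fun j _ => Finset.sum_congr rfl fun u _ => ?_
          rw [hh ((i, j), u), TensorProduct.sum_tmul, map_sum, TensorProduct.tmul_sum]
          refine Finset.sum_congr rfl fun v _ => ?_
          simp
      _ = ∑ j, ∑ s, HH.a.symm (y1 i j) ⊗ₜ[k]
            ((TensorProduct.assoc k H H H) (HH.comul (z1 (i, j) s) ⊗ₜ[k] HH.a (z2 (i, j) s))) := key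
      _ = _ := by
          refine Finset.sum_congr rfl fun j _ => ?_
          have cb := congrArg (TensorProduct.map (LinearMap.id (R := k) (M := H))
              (TensorProduct.map LinearMap.id (HH.a.toLinearMap ∘ₗ HH.a.toLinearMap)))
            (HH.co_fam (y2 i j) (fun s => z1 (i, j) s) (fun s => z2 (i, j) s) (hz (i, j))
              (fun s r => q1 ((i, j), s) r) (fun s r => q2 ((i, j), s) r)
              (fun s => hq ((i, j), s))
              (fun s t => w1 ((i, j), s) t) (fun s t => w2 ((i, j), s) t)
              (fun s => hw ((i, j), s)))
          simp only [map_sum, TensorProduct.map_tmul, LinearMap.id_coe, id_eq,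
            LinearMap.comp_apply, LinearEquiv.coe_toLinearMap,
            LinearEquiv.apply_symm_apply] at cb
          calc (∑ s, HH.a.symm (y1 i j) ⊗ₜ[k]
                ((TensorProduct.assoc k H H H)
                  (HH.comul (z1 (i, j) s) ⊗ₜ[k] HH.a (z2 (i, j) s))))
              = ∑ s, ∑ r, HH.a.symm (y1 i j) ⊗ₜ[k] (q1 ((i, j), s) r ⊗ₜ[k]
                  (q2 ((i, j), s) r ⊗ₜ[k] HH.a (z2 (i, j) s))) := by
                refine Finset.sum_congr rfl fun s _ => ?_
                rw [hq ((i, j), s), TensorProduct.sum_tmul, map_sum, TensorProduct.tmul_sum]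
                refine Finset.sum_congr rfl fun r _ => ?_
                simp
            _ = HH.a.symm (y1 i j) ⊗ₜ[k] (∑ s, ∑ r, q1 ((i, j), s) r ⊗ₜ[k]
                  (q2 ((i, j), s) r ⊗ₜ[k] HH.a (z2 (i, j) s))) := by
                rw [TensorProduct.tmul_sum]
                exact Finset.sum_congr rfl fun s _ => (TensorProduct.tmul_sum _ _ _).symm
            _ = HH.a.symm (y1 i j) ⊗ₜ[k] (∑ s, ∑ t, HH.a.symm (z1 (i, j) s) ⊗ₜ[k]
                  (w1 ((i, j), s) t ⊗ₜ[k] HH.a (HH.a (w2 ((i, j), s) t)))) := by rw [cb]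
            _ = ∑ s, ∑ t, HH.a.symm (y1 i j) ⊗ₜ[k]
                  (HH.a.symm (z1 (i, j) s) ⊗ₜ[k]
                    (w1 ((i, j), s) t ⊗ₜ[k] HH.a (HH.a (w2 ((i, j), s) t)))) := by
                rw [TensorProduct.tmul_sum]
                exact Finset.sum_congr rfl fun s _ => TensorProduct.tmul_sum _ _ _
  -- decorated transport maps
  have main_per_j' : ∀ j' : Fin m,
      (∑ i, ∑ kk, ∑ j, ∑ s,
        HH.a (HH.a (y1 i j)) ⊗ₜ[k]
          (HH.mul (HH.mul (B (z1 (i, j) s)) (HH.a.symm (HH.a.symm (c1 j')))) (AS (e2 i kk))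
            ⊗ₜ[k]
           HH.mul (HH.mul (B (z2 (i, j) s)) (HH.a.symm (HH.a.symm (c2 j')))) (AS (e1 i kk))))
      = ∑ i, ∑ j, ∑ u, ∑ v,
          HH.a (HH.a (HH.a (HH.a (h1 ((i, j), u) v)))) ⊗ₜ[k]
            (HH.mul (HH.mul (B (HH.a (h2 ((i, j), u) v))) (HH.a.symm (HH.a.symm (c1 j'))))
                (AS (HH.a (g1 (i, j) u)))
              ⊗ₜ[k]
             HH.mul (HH.mul (B (HH.a.symm (y2 i j))) (HH.a.symm (HH.a.symm (c2 j'))))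
                (AS (HH.a.symm (x1 i)))) := by
    intro j'
    set κ1 : H := HH.a.symm (HH.a.symm (c1 j')) with hκ1
    set κ2 : H := HH.a.symm (HH.a.symm (c2 j')) with hκ2
    set Gmap : H ⊗[k] H →ₗ[k] H :=
      HH.mulT ∘ₗ TensorProduct.map (HH.mul.flip κ1 ∘ₗ B.toLinearMap) AS with hGmap
    set Kmap : H ⊗[k] H →ₗ[k] H :=
      HH.mulT ∘ₗ TensorProduct.map (HH.mul.flip κ2 ∘ₗ B.toLinearMap) AS with hKmap
    set Lam : (H ⊗[k] H) ⊗[k] (H ⊗[k] (H ⊗[k] H)) →ₗ[k] H ⊗[k] (H ⊗[k] H) :=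
      (TensorProduct.map LinearMap.id (TensorProduct.map Gmap Kmap)) ∘ₗ
      (TensorProduct.map (HH.a.toLinearMap ∘ₗ HH.a.toLinearMap)
        (TensorProduct.tensorTensorTensorComm k H H H H).toLinearMap) ∘ₗ
      (TensorProduct.assoc k H (H ⊗[k] H) (H ⊗[k] H)).toLinearMap ∘ₗ
      (TensorProduct.comm k (H ⊗[k] H) (H ⊗[k] (H ⊗[k] H))).toLinearMap ∘ₗ
      (TensorProduct.map (TensorProduct.comm k H H).toLinearMap LinearMap.id) with hLam
    have hLamApp : ∀ l1 l2 l3 l4 l5 : H,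
        Lam ((l1 ⊗ₜ[k] l2) ⊗ₜ[k] (l3 ⊗ₜ[k] (l4 ⊗ₜ[k] l5)))
          = HH.a (HH.a l3) ⊗ₜ[k]
              (HH.mul (HH.mul (B l4) κ1) (AS l2) ⊗ₜ[k] HH.mul (HH.mul (B l5) κ2) (AS l1)) := by
      intro l1 l2 l3 l4 l5
      simp [hLam, hGmap, hKmap, tensorTensorTensorComm_tmul]
    have keyL := congrArg Lam E1
    simp only [map_sum, hLamApp] at keyL
    have keyR : ∀ i, (∑ j, ∑ u, ∑ v,
          HH.a (HH.a (HH.a (HH.a (h1 ((i, j), u) v)))) ⊗ₜ[k]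
            (HH.mul (HH.mul (B (HH.a (h2 ((i, j), u) v))) κ1) (AS (HH.a (g1 (i, j) u)))
              ⊗ₜ[k]
             HH.mul (HH.mul (B (HH.a.symm (y2 i j))) κ2) (AS (HH.a.symm (x1 i)))))
        = ∑ j, ∑ s, ∑ t,
            HH.a (HH.a (HH.a (z1 (i, j) s))) ⊗ₜ[k]
              (HH.mul (HH.mul (B (HH.a (w1 ((i, j), s) t))) κ1) (AS (y1 i j))
                ⊗ₜ[k]
               HH.mul (HH.mul (B (HH.a (w2 ((i, j), s) t))) κ2) (AS (HH.a.symm (x1 i)))) := by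
      intro i
      set K2 : H →ₗ[k] H := HH.mul.flip (AS (HH.a.symm (x1 i))) ∘ₗ HH.mul.flip κ2 ∘ₗ
        B.toLinearMap ∘ₗ HH.a.symm.toLinearMap with hK2
      set G2 : H ⊗[k] H →ₗ[k] H := HH.mulT ∘ₗ
        TensorProduct.map (HH.mul.flip κ1 ∘ₗ B.toLinearMap ∘ₗ HH.a.toLinearMap)
          (AS ∘ₗ HH.a.toLinearMap) with hG2
      set Lam' : H ⊗[k] (H ⊗[k] (H ⊗[k] H)) →ₗ[k] H ⊗[k] (H ⊗[k] H) :=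
        (TensorProduct.map
            (HH.a.toLinearMap ∘ₗ HH.a.toLinearMap ∘ₗ HH.a.toLinearMap ∘ₗ HH.a.toLinearMap)
            (TensorProduct.map G2 K2)) ∘ₗ
        (TensorProduct.map LinearMap.id (TensorProduct.assoc k H H H).symm.toLinearMap) ∘ₗ
        (TensorProduct.map LinearMap.id
          (TensorProduct.map LinearMap.id (TensorProduct.comm k H H).toLinearMap)) ∘ₗ
        (TensorProduct.map LinearMap.id (TensorProduct.assoc k H H H).toLinearMap) ∘ₗ
        (TensorProduct.assoc k H (H ⊗[k] H) H).toLinearMap ∘ₗ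
        (TensorProduct.comm k H (H ⊗[k] (H ⊗[k] H))).toLinearMap with hLam'
      have hLamApp' : ∀ l2 l3 l4 l5 : H,
          Lam' (l2 ⊗ₜ[k] (l3 ⊗ₜ[k] (l4 ⊗ₜ[k] l5)))
            = HH.a (HH.a (HH.a (HH.a l3))) ⊗ₜ[k]
                (HH.mul (HH.mul (B (HH.a l4)) κ1) (AS (HH.a l2)) ⊗ₜ[k]
                  HH.mul (HH.mul (B (HH.a.symm l5)) κ2) (AS (HH.a.symm (x1 i)))) := by
        intro l2 l3 l4 l5
        simp [hLam', hG2, hK2]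
      have keyR0 := congrArg Lam' (F4 i)
      simp only [map_sum, hLamApp', LinearEquiv.apply_symm_apply,
        LinearEquiv.symm_apply_apply] at keyR0
      exact keyR0
    calc (∑ i, ∑ kk, ∑ j, ∑ s,
          HH.a (HH.a (y1 i j)) ⊗ₜ[k]
            (HH.mul (HH.mul (B (z1 (i, j) s)) κ1) (AS (e2 i kk))
              ⊗ₜ[k] HH.mul (HH.mul (B (z2 (i, j) s)) κ2) (AS (e1 i kk))))
        = ∑ i, ∑ j, ∑ s, ∑ t,
            HH.a (HH.a (HH.a (z1 (i, j) s))) ⊗ₜ[k]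
              (HH.mul (HH.mul (B (HH.a (w1 ((i, j), s) t))) κ1) (AS (y1 i j))
                ⊗ₜ[k]
               HH.mul (HH.mul (B (HH.a (w2 ((i, j), s) t))) κ2) (AS (HH.a.symm (x1 i)))) :=
          keyL
      _ = _ := Finset.sum_congr rfl fun i _ => (keyR i).symm
  -- expand and reorder the left-hand side
  have hLHSfin : TensorProduct.map LinearMap.id HH.comul (HH.psi0 A B (x ⊗ₜ[k] c))
      = ∑ j', ∑ i, ∑ kk, ∑ j, ∑ s,
          HH.a (HH.a (y1 i j)) ⊗ₜ[k]
            (HH.mul (HH.mul (B (z1 (i, j) s)) (HH.a.symm (HH.a.symm (c1 j')))) (AS (e2 i kk))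
              ⊗ₜ[k]
             HH.mul (HH.mul (B (z2 (i, j) s)) (HH.a.symm (HH.a.symm (c2 j')))) (AS (e1 i kk))) := by
    calc TensorProduct.map LinearMap.id HH.comul (HH.psi0 A B (x ⊗ₜ[k] c))
        = ∑ i, ∑ j, ∑ s, ∑ j', ∑ kk,
            HH.a (HH.a (y1 i j)) ⊗ₜ[k]
              (HH.mul (HH.mul (B (z1 (i, j) s)) (HH.a.symm (HH.a.symm (c1 j')))) (AS (e2 i kk))
                ⊗ₜ[k]
               HH.mul (HH.mul (B (z2 (i, j) s)) (HH.a.symm (HH.a.symm (c2 j')))) (AS (e1 i kk))) := by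
          rw [hL1]
          refine Finset.sum_congr rfl fun i _ => Finset.sum_congr rfl fun j _ => ?_
          rw [hL2 i j, TensorProduct.tmul_sum]
          refine Finset.sum_congr rfl fun s _ => ?_
          rw [TensorProduct.tmul_sum]
          refine Finset.sum_congr rfl fun j' _ => ?_
          rw [TensorProduct.tmul_sum]
      _ = ∑ i, ∑ j, ∑ j', ∑ s, ∑ kk, _ := by
          exact Finset.sum_congr rfl fun i _ => Finset.sum_congr rfl fun j _ =>
            Finset.sum_comm
      _ = ∑ i, ∑ j', ∑ j, ∑ s, ∑ kk, _ := by
          exact Finset.sum_congr rfl fun i _ => Finset.sum_comm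
      _ = ∑ j', ∑ i, ∑ j, ∑ s, ∑ kk, _ := Finset.sum_comm
      _ = ∑ j', ∑ i, ∑ j, ∑ kk, ∑ s, _ := by
          exact Finset.sum_congr rfl fun j' _ => Finset.sum_congr rfl fun i _ =>
            Finset.sum_congr rfl fun j _ => Finset.sum_comm
      _ = ∑ j', ∑ i, ∑ kk, ∑ j, ∑ s, _ := by
          exact Finset.sum_congr rfl fun j' _ => Finset.sum_congr rfl fun i _ =>
            Finset.sum_comm
  rw [hLHSfin]
  refine Finset.sum_congr rfl fun j' _ => ?_
  rw [main_per_j' j']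
  -- expand the right-hand side for fixed j'
  have hP : HH.psi0 A B (HH.a.symm x ⊗ₜ[k] c2 j')
      = ∑ i, ∑ j, HH.a (y1 i j) ⊗ₜ[k]
          HH.mul (HH.mul (B (HH.a.symm (y2 i j))) (HH.a.symm (HH.a.symm (c2 j'))))
            (A (HH.S.symm (HH.a.symm (x1 i)))) := by
    have hx' : HH.comul (HH.a.symm x) = ∑ i, HH.a.symm (x1 i) ⊗ₜ[k] HH.a.symm (x2 i) := by
      rw [HH.comul_ainv, hx, map_sum]; simp
    have hx2' : ∀ i, HH.comul (HH.a.symm (x2 i))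
        = ∑ j, HH.a.symm (y1 i j) ⊗ₜ[k] HH.a.symm (y2 i j) := by
      intro i; rw [HH.comul_ainv, hy i, map_sum]; simp
    rw [HH.psi0_fam A B (HH.a.symm x) (c2 j') _ _ hx'
      (fun i j => HH.a.symm (y1 i j)) (fun i j => HH.a.symm (y2 i j)) hx2']
    refine Finset.sum_congr rfl fun i _ => Finset.sum_congr rfl fun j _ => ?_
    rw [HH.a.apply_symm_apply]
  have hP2 : ∀ i j, HH.psi0 A B (HH.a (y1 i j) ⊗ₜ[k] c1 j')
      = ∑ u, ∑ v, HH.a (HH.a (HH.a (h1 ((i, j), u) v))) ⊗ₜ[k]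
          HH.mul (HH.mul (B (HH.a (h2 ((i, j), u) v))) (HH.a.symm (HH.a.symm (c1 j'))))
            (A (HH.S.symm (HH.a (g1 (i, j) u)))) := by
    intro i j
    have hx'' : HH.comul (HH.a (y1 i j))
        = ∑ u, HH.a (g1 (i, j) u) ⊗ₜ[k] HH.a (g2 (i, j) u) := by
      rw [HH.comul_a, hg (i, j), map_sum]; simp
    have hx2'' : ∀ u, HH.comul (HH.a (g2 (i, j) u))
        = ∑ v, HH.a (h1 ((i, j), u) v) ⊗ₜ[k] HH.a (h2 ((i, j), u) v) := by
      intro u; rw [HH.comul_a, hh ((i, j), u), map_sum]; simp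
    rw [HH.psi0_fam A B (HH.a (y1 i j)) (c1 j') _ _ hx''
      (fun u v => HH.a (h1 ((i, j), u) v)) (fun u v => HH.a (h2 ((i, j), u) v)) hx2'']
  rw [hP, TensorProduct.sum_tmul, map_sum, map_sum, map_sum, map_sum, map_sum]
  refine Finset.sum_congr rfl fun i _ => ?_
  rw [TensorProduct.sum_tmul, map_sum, map_sum, map_sum, map_sum, map_sum]
  refine Finset.sum_congr rfl fun j _ => ?_
  simp only [LinearEquiv.coe_coe, TensorProduct.assoc_tmul, TensorProduct.map_tmul,
    LinearMap.id_coe, id_eq, TensorProduct.comm_tmul, LinearEquiv.coe_toLinearMap,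
    LinearMap.comp_apply, TensorProduct.assoc_symm_tmul]
  rw [hP2 i j]
  simp only [map_sum, TensorProduct.sum_tmul]
  refine Finset.sum_congr rfl fun u _ => Finset.sum_congr rfl fun v _ => ?_
  simp [hAS]

end HomHopf
end HomHopfAux

/-- The map ψ(a⊗c) = α²(a₂₁) ⊗ (B(a₂₂)α⁻²(c))·A(S⁻¹(a₁)) satisfies the
comultiplicativity axiom (2.5): _ψa ⊗ Δ(c^ψ) = α(_{φψ}α⁻¹(a)) ⊗ (c₁^φ ⊗ c₂^ψ). -/
theorem stmt_7 {k : Type*} [Field k] {H : Type*} [AddCommGroup H] [Module k H]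
    (HH : HomHopf k H) (A B : H ≃ₗ[k] H)
    (hA : IsHomHopfAuto HH A) (hB : IsHomHopfAuto HH B)
    (psi : H ⊗[k] H →ₗ[k] H ⊗[k] H)
    (hpsi : ∀ (x c : H) (n : ℕ) (x1 x2 : Fin n → H),
      HH.comul x = ∑ i, x1 i ⊗ₜ[k] x2 i →
      ∀ (p : ℕ) (x21 x22 : Fin n → Fin p → H),
      (∀ i, HH.comul (x2 i) = ∑ j, x21 i j ⊗ₜ[k] x22 i j) →
      psi (x ⊗ₜ[k] c) = ∑ i, ∑ j,
        HH.a (HH.a (x21 i j)) ⊗ₜ[k]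
          HH.mul (HH.mul (B (x22 i j)) (HH.a.symm (HH.a.symm c))) (A (HH.S.symm (x1 i)))) :
    ∀ (x c : H) (n : ℕ) (u v : Fin n → H),
      psi (x ⊗ₜ[k] c) = ∑ i, u i ⊗ₜ[k] v i →
      ∀ (m : ℕ) (c1 c2 : Fin m → H),
      HH.comul c = ∑ j, c1 j ⊗ₜ[k] c2 j →
      ∀ (p : ℕ) (P Q : Fin m → Fin p → H),
      (∀ j, psi (HH.a.symm x ⊗ₜ[k] c2 j) = ∑ l, P j l ⊗ₜ[k] Q j l) →
      ∀ (r : ℕ) (R T : Fin m → Fin p → Fin r → H),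
      (∀ j l, psi (P j l ⊗ₜ[k] c1 j) = ∑ t, R j l t ⊗ₜ[k] T j l t) →
      (∑ i, u i ⊗ₜ[k] HH.comul (v i))
        = ∑ j, ∑ l, ∑ t, HH.a (R j l t) ⊗ₜ[k] (T j l t ⊗ₜ[k] Q j l) := by
  intro x c n u v huv m' c1 c2 hc p P Q hPQ r R T hRT
  have psi_eq : ∀ x' c' : H, psi (x' ⊗ₜ[k] c') = HH.psi0 A B (x' ⊗ₜ[k] c') := by
    intro x' c'
    obtain ⟨n0, a1, a2, hx0⟩ := myexists_fin (HH.comul x')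
    obtain ⟨p0, b1, b2, hb⟩ := fam_decomp (fun i => HH.comul (a2 i))
    rw [hpsi x' c' n0 a1 a2 hx0 p0 b1 b2 hb, HH.psi0_fam A B x' c' a1 a2 hx0 b1 b2 hb]
  have hL : (∑ i, u i ⊗ₜ[k] HH.comul (v i))
      = TensorProduct.map LinearMap.id HH.comul (HH.psi0 A B (x ⊗ₜ[k] c)) := by
    rw [← psi_eq, huv, map_sum]
    simp
  have hR : ∀ j, (TensorProduct.assoc k H H H)
      ((TensorProduct.map
          ((TensorProduct.map HH.a.toLinearMap LinearMap.id) ∘ₗ HH.psi0 A B) LinearMap.id)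
        ((TensorProduct.assoc k H H H).symm
          ((TensorProduct.map LinearMap.id (TensorProduct.comm k H H).toLinearMap)
            ((TensorProduct.assoc k H H H)
              (HH.psi0 A B (HH.a.symm x ⊗ₜ[k] c2 j) ⊗ₜ[k] c1 j)))))
      = ∑ l, ∑ t, HH.a (R j l t) ⊗ₜ[k] (T j l t ⊗ₜ[k] Q j l) := by
    intro j
    rw [← psi_eq, hPQ j]
    simp only [TensorProduct.sum_tmul, map_sum]
    refine Finset.sum_congr rfl fun l _ => ?_
    simp only [LinearEquiv.coe_coe, TensorProduct.assoc_tmul, TensorProduct.map_tmul,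
      LinearMap.id_coe, id_eq, TensorProduct.comm_tmul, TensorProduct.assoc_symm_tmul,
      LinearMap.comp_apply]
    rw [← psi_eq, hRT j l]
    simp only [map_sum, TensorProduct.sum_tmul]
    refine Finset.sum_congr rfl fun t _ => ?_
    simp
  rw [hL, HH.main_identity A B hA.map_comul hB.map_comul x c c1 c2 hc]
  exact Finset.sum_congr rfl fun j _ => hR j
end

section
/- If (N,ν) is a (C,D)-Yetter-Drinfeld Hom-module and (A,B) ∈ Aut_{mHH}(H)², then N with the new action h▷n = (C⁻¹BCA⁻¹)(h)·n and new coaction n ↦ n₍₀₎ ⊗ (A∘B⁻¹)(n₍₁₎) is an (ACA⁻¹, AB⁻¹DC⁻¹BCA⁻¹)-Yetter-Drinfeld Hom-module. -/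
open TensorProduct

section Aux
variable {k : Type*} [Field k] {H : Type*} [AddCommGroup H] [Module k H] (HH : HomHopf k H)

lemma homhopf_antipode_unique (T : H →ₗ[k] H)
    (hTa : ∀ x, T (HH.a x) = HH.a (T x))
    (hTleft : ∀ x : H, TensorProduct.lift HH.mul
        (TensorProduct.map T LinearMap.id (HH.comul x)) = HH.counit x • HH.one) :
    T = HH.S.toLinearMap := by
  classical
  set M : H ⊗[k] H →ₗ[k] H := TensorProduct.lift HH.mul with hM
  have hMapp : ∀ x y : H, M (x ⊗ₜ[k] y) = HH.mul x y := fun x y => rfl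
  set Δ : H →ₗ[k] H ⊗[k] H := HH.comul
  set α : H →ₗ[k] H := HH.a.toLinearMap
  set αi : H →ₗ[k] H := HH.a.symm.toLinearMap
  set Sl : H →ₗ[k] H := HH.S.toLinearMap
  -- S commutes with a.symm
  have hSa : ∀ x, HH.S (HH.a.symm x) = HH.a.symm (HH.S x) := by
    intro x
    apply HH.a.injective
    rw [← HH.S_a, HH.a.apply_symm_apply, HH.a.apply_symm_apply]
  set Φ : H ⊗[k] (H ⊗[k] H) →ₗ[k] H :=
    M ∘ₗ (TensorProduct.map (M ∘ₗ TensorProduct.map T LinearMap.id) (α ∘ₗ Sl)) ∘ₗ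
      (TensorProduct.assoc k H H H).symm.toLinearMap with hΦ
  have hΦapp : ∀ (u v w : H), Φ (u ⊗ₜ[k] (v ⊗ₜ[k] w))
      = HH.mul (HH.mul (T u) v) (HH.a (HH.S w)) := fun u v w => rfl
  -- key1
  have key1 : Φ ∘ₗ (TensorProduct.map αi Δ)
      = (α ∘ₗ T) ∘ₗ (TensorProduct.rid k H).toLinearMap ∘ₗ
          (TensorProduct.map LinearMap.id HH.counit) := by
    apply TensorProduct.ext'
    intro u v
    have sub : ∀ t : H ⊗[k] H, Φ ((αi u) ⊗ₜ[k] t)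
        = HH.mul (T u) (M (TensorProduct.map LinearMap.id Sl t)) := by
      intro t
      induction t using TensorProduct.induction_on with
      | zero => simp
      | tmul p q =>
          simp only [TensorProduct.map_tmul, hΦapp, hMapp, LinearMap.id_coe, id_eq]
          have h2 : HH.a (T (HH.a.symm u)) = T u := by
            rw [← hTa, HH.a.apply_symm_apply]
          exact (HH.hom_assoc (T (HH.a.symm u)) p (HH.S q)).symm.trans (by rw [h2]; rfl)
      | add s t hs ht =>
          simp only [TensorProduct.tmul_add, map_add, hs, ht, TensorProduct.map_tmul]

    simp only [LinearMap.coe_comp, Function.comp_apply, TensorProduct.map_tmul,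
      LinearEquiv.coe_coe, LinearMap.id_coe, id_eq]
    rw [sub (Δ v)]
    have := HH.antipode_right v
    rw [this]
    simp only [map_smul, TensorProduct.rid_tmul]
    rw [HH.mul_one' (T u)]; rfl
  -- key2
  have key2 : Φ ∘ₗ (TensorProduct.assoc k H H H).toLinearMap ∘ₗ (TensorProduct.map Δ αi)
      = (α ∘ₗ Sl) ∘ₗ (TensorProduct.lid k H).toLinearMap ∘ₗ
          (TensorProduct.map HH.counit LinearMap.id) := by
    apply TensorProduct.ext'
    intro u v
    have sub : ∀ t : H ⊗[k] H,
        Φ ((TensorProduct.assoc k H H H) (t ⊗ₜ[k] (αi v)))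
        = M ((M (TensorProduct.map T LinearMap.id t)) ⊗ₜ[k] (HH.S v)) := by
      intro t
      induction t using TensorProduct.induction_on with
      | zero => simp
      | tmul p q =>
          simp only [TensorProduct.assoc_tmul, TensorProduct.map_tmul, hΦapp, hMapp,
            LinearMap.id_coe, id_eq]
          have h3 : HH.a (HH.S (HH.a.symm v)) = HH.S v := by
            rw [hSa, HH.a.apply_symm_apply]
          exact congrArg (HH.mul (HH.mul (T p) q)) h3
      | add s t hs ht =>
          simp only [TensorProduct.add_tmul, map_add, hs, ht]
    simp only [LinearMap.coe_comp, Function.comp_apply, TensorProduct.map_tmul,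
      LinearEquiv.coe_coe, LinearMap.id_coe, id_eq]
    rw [sub (Δ u)]
    have h4 : M (TensorProduct.map T LinearMap.id (Δ u)) = HH.counit u • HH.one := hTleft u
    rw [h4]
    rw [← TensorProduct.smul_tmul', map_smul, hMapp, HH.one_mul' (HH.S v)]
    simp only [TensorProduct.lid_tmul, map_smul]
    rfl
  -- conclude
  have key3 : ∀ x : H, HH.a (T (HH.a.symm x)) = HH.a (HH.S (HH.a.symm x)) := by
    intro x
    have e0 : Φ ((TensorProduct.map αi Δ) (Δ x))
        = Φ ((TensorProduct.assoc k H H H) ((TensorProduct.map Δ αi) (Δ x))) := by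
      have := congrArg (fun t => Φ t) (LinearMap.congr_fun HH.hom_coassoc x)
      simpa using this
    have e1 := LinearMap.congr_fun key1 (Δ x)
    have e2 := LinearMap.congr_fun key2 (Δ x)
    simp only [LinearMap.coe_comp, Function.comp_apply, LinearEquiv.coe_coe] at e1 e2
    rw [e1, e2] at e0
    rw [HH.comul_counit x, HH.counit_comul x] at e0
    exact e0
  ext y
  have := key3 (HH.a y)
  rw [HH.a.symm_apply_apply] at this
  exact HH.a.injective this

lemma auto_lift_mul {f : H ≃ₗ[k] H} (hf : IsHomHopfAuto HH f) :
    ∀ t : H ⊗[k] H, f (TensorProduct.lift HH.mul t)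
      = TensorProduct.lift HH.mul
          (TensorProduct.map f.toLinearMap f.toLinearMap t) := by
  intro t
  induction t using TensorProduct.induction_on with
  | zero => simp
  | tmul p q => simpa using hf.map_mul p q
  | add s t hs ht => simp [map_add, hs, ht]

lemma auto_S {f : H ≃ₗ[k] H} (hf : IsHomHopfAuto HH f) :
    ∀ x, f (HH.S x) = HH.S (f x) := by
  set T : H →ₗ[k] H := f.toLinearMap ∘ₗ HH.S.toLinearMap ∘ₗ f.symm.toLinearMap with hT
  have hTapp : ∀ x, T x = f (HH.S (f.symm x)) := fun _ => rfl
  have hfa' : ∀ x, f.symm (HH.a x) = HH.a (f.symm x) := by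
    intro x
    apply f.injective
    rw [hf.map_a, f.apply_symm_apply, f.apply_symm_apply]
  have hTa : ∀ x, T (HH.a x) = HH.a (T x) := by
    intro x
    rw [hTapp, hTapp, hfa', HH.S_a, hf.map_a]
  have hTleft : ∀ x : H, TensorProduct.lift HH.mul
      (TensorProduct.map T LinearMap.id (HH.comul x)) = HH.counit x • HH.one := by
    intro x
    obtain ⟨y, rfl⟩ : ∃ y, f y = x := ⟨f.symm x, f.apply_symm_apply x⟩
    rw [hf.map_comul]
    have step : ∀ t : H ⊗[k] H,
        (TensorProduct.map T LinearMap.id)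
          ((TensorProduct.map f.toLinearMap f.toLinearMap) t)
        = (TensorProduct.map f.toLinearMap f.toLinearMap)
            ((TensorProduct.map HH.S.toLinearMap LinearMap.id) t) := by
      intro t
      induction t using TensorProduct.induction_on with
      | zero => simp
      | tmul p q =>
          simp only [TensorProduct.map_tmul, LinearMap.id_coe, id_eq, hTapp,
            LinearEquiv.coe_coe, f.symm_apply_apply]
      | add s t hs ht => simp [map_add, hs, ht]
    rw [step, ← auto_lift_mul HH hf, HH.antipode_left, map_smul, hf.map_one, hf.map_counit]
  have hTS := homhopf_antipode_unique HH T hTa hTleft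
  intro x
  have := LinearMap.congr_fun hTS (f x)
  rw [hTapp, f.symm_apply_apply] at this
  exact this

lemma auto_Sinv {f : H ≃ₗ[k] H} (hf : IsHomHopfAuto HH f) :
    ∀ x, f (HH.S.symm x) = HH.S.symm (f x) := by
  intro x
  apply HH.S.injective
  rw [← auto_S HH hf, HH.S.apply_symm_apply, HH.S.apply_symm_apply]

lemma auto_a_inv {f : H ≃ₗ[k] H} (hf : IsHomHopfAuto HH f) :
    ∀ x, f (HH.a.symm x) = HH.a.symm (f x) := by
  intro x
  apply HH.a.injective
  rw [← hf.map_a, HH.a.apply_symm_apply, HH.a.apply_symm_apply]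

lemma auto_trans {f g : H ≃ₗ[k] H} (hf : IsHomHopfAuto HH f) (hg : IsHomHopfAuto HH g) :
    IsHomHopfAuto HH (f.trans g) := by
  constructor
  · intro x y
    simp only [LinearEquiv.trans_apply, hf.map_mul, hg.map_mul]
  · simp only [LinearEquiv.trans_apply, hf.map_one, hg.map_one]
  · intro x
    simp only [LinearEquiv.trans_apply, hf.map_comul, hg.map_comul]
    have := LinearMap.congr_fun
      (TensorProduct.map_comp g.toLinearMap g.toLinearMap f.toLinearMap f.toLinearMap)
      (HH.comul x)
    simp only [LinearMap.coe_comp, Function.comp_apply] at this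
    rw [← this]
    rfl
  · intro x
    simp only [LinearEquiv.trans_apply, hf.map_counit, hg.map_counit]
  · intro x
    simp only [LinearEquiv.trans_apply, hf.map_a, hg.map_a]

lemma map_symm_cancel (f : H ≃ₗ[k] H) :
    ∀ t : H ⊗[k] H, (TensorProduct.map f.symm.toLinearMap f.symm.toLinearMap)
      ((TensorProduct.map f.toLinearMap f.toLinearMap) t) = t := by
  intro t
  induction t using TensorProduct.induction_on with
  | zero => simp
  | tmul p q => simp
  | add s t hs ht => simp [map_add, hs, ht]

lemma auto_symm {f : H ≃ₗ[k] H} (hf : IsHomHopfAuto HH f) :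
    IsHomHopfAuto HH f.symm := by
  constructor
  · intro x y
    apply f.injective
    rw [hf.map_mul, f.apply_symm_apply, f.apply_symm_apply, f.apply_symm_apply]
  · apply f.injective
    rw [hf.map_one, f.apply_symm_apply]
  · intro x
    have h1 : HH.comul x
        = (TensorProduct.map f.toLinearMap f.toLinearMap) (HH.comul (f.symm x)) := by
      conv_lhs => rw [← f.apply_symm_apply x, hf.map_comul]
    calc HH.comul (f.symm x)
        = (TensorProduct.map f.symm.toLinearMap f.symm.toLinearMap)
            ((TensorProduct.map f.toLinearMap f.toLinearMap)
              (HH.comul (f.symm x))) := (map_symm_cancel f _).symm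
      _ = _ := by rw [← h1]
  · intro x
    conv_rhs => rw [← f.apply_symm_apply x, hf.map_counit]
  · intro x
    apply f.injective
    rw [hf.map_a, f.apply_symm_apply, f.apply_symm_apply]

end Aux

/-- Proposition 3.3: if (N,ν) is a (C,D)-Yetter-Drinfeld Hom-module and (A,B) is a
pair of Hom-Hopf automorphisms, then N with action h▷n = (C⁻¹BCA⁻¹)(h)·n and
coaction n ↦ n₍₀₎ ⊗ (AB⁻¹)(n₍₁₎) is an (ACA⁻¹, AB⁻¹DC⁻¹BCA⁻¹)-Yetter-Drinfeld
Hom-module. -/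
theorem stmt_10 {k : Type*} [Field k] {H : Type*} [AddCommGroup H] [Module k H]
    {N : Type*} [AddCommGroup N] [Module k N]
    (HH : HomHopf k H) (A B C D : H ≃ₗ[k] H)
    (hA : IsHomHopfAuto HH A) (hB : IsHomHopfAuto HH B)
    (hC : IsHomHopfAuto HH C) (hD : IsHomHopfAuto HH D)
    (YN : YDModule HH C D N) :
    ∃ Y : YDModule HH ((A.symm.trans C).trans A)
        ((((((A.symm.trans C).trans B).trans C.symm).trans D).trans B.symm).trans A) N,
      Y.act = YN.act.comp (((A.symm.trans C).trans B).trans C.symm).toLinearMap ∧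
      Y.coact = (TensorProduct.map LinearMap.id (B.symm.trans A).toLinearMap).comp YN.coact ∧
      Y.mu = YN.mu := by
  classical
  set φ : H ≃ₗ[k] H := ((A.symm.trans C).trans B).trans C.symm with hφ
  set ψ : H ≃ₗ[k] H := B.symm.trans A with hψ
  have hφauto : IsHomHopfAuto HH φ :=
    auto_trans HH (auto_trans HH (auto_trans HH (auto_symm HH hA) hC) hB) (auto_symm HH hC)
  have hψauto : IsHomHopfAuto HH ψ := auto_trans HH (auto_symm HH hB) hA
  have hψa' : ∀ x, ψ (HH.a.symm x) = HH.a.symm (ψ x) := auto_a_inv HH hψauto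
  refine ⟨{ act := YN.act ∘ₗ φ.toLinearMap
            coact := (TensorProduct.map LinearMap.id ψ.toLinearMap) ∘ₗ YN.coact
            mu := YN.mu
            hom_act := ?_
            mu_act := ?_
            one_act := ?_
            hom_coact := ?_
            coact_mu := ?_
            coact_counit := ?_
            compat := ?_ }, rfl, rfl, rfl⟩
  · -- hom_act
    intro h g m
    simp only [LinearMap.comp_apply, LinearEquiv.coe_coe]
    rw [hφauto.map_a, hφauto.map_mul]
    exact YN.hom_act _ _ m
  · -- mu_act
    intro h m
    simp only [LinearMap.comp_apply, LinearEquiv.coe_coe]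
    rw [hφauto.map_a]
    exact YN.mu_act _ m
  · -- one_act
    intro m
    simp only [LinearMap.comp_apply, LinearEquiv.coe_coe]
    rw [hφauto.map_one]
    exact YN.one_act m
  · -- hom_coact
    apply LinearMap.ext
    intro m
    have claim1 : ∀ t : N ⊗[k] H,
        (TensorProduct.map YN.mu.symm.toLinearMap HH.comul)
          ((TensorProduct.map LinearMap.id ψ.toLinearMap) t)
        = (TensorProduct.map LinearMap.id
            (TensorProduct.map ψ.toLinearMap ψ.toLinearMap))
            ((TensorProduct.map YN.mu.symm.toLinearMap HH.comul) t) := by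
      intro t
      induction t using TensorProduct.induction_on with
      | zero => simp
      | tmul n0 h0 =>
          simp only [TensorProduct.map_tmul, LinearMap.id_coe, id_eq, LinearEquiv.coe_coe]
          rw [hψauto.map_comul]
      | add s t hs ht => simp only [map_add, hs, ht]
    have claim2 : ∀ t : N ⊗[k] H,
        (TensorProduct.assoc k N H H)
          ((TensorProduct.map
              ((TensorProduct.map LinearMap.id ψ.toLinearMap) ∘ₗ YN.coact)
              HH.a.symm.toLinearMap)
            ((TensorProduct.map LinearMap.id ψ.toLinearMap) t))
        = (TensorProduct.map LinearMap.id
            (TensorProduct.map ψ.toLinearMap ψ.toLinearMap))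
            ((TensorProduct.assoc k N H H)
              ((TensorProduct.map YN.coact HH.a.symm.toLinearMap) t)) := by
      intro t
      induction t using TensorProduct.induction_on with
      | zero => simp
      | tmul n0 h0 =>
          simp only [TensorProduct.map_tmul, LinearMap.id_coe, id_eq, LinearEquiv.coe_coe,
            LinearMap.comp_apply]
          rw [← hψa' h0]
          generalize YN.coact n0 = s
          generalize HH.a.symm h0 = w
          induction s using TensorProduct.induction_on with
          | zero => simp
          | tmul n1 hh =>
              simp only [TensorProduct.map_tmul, LinearMap.id_coe, id_eq,
                LinearEquiv.coe_coe, TensorProduct.assoc_tmul]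
          | add s1 s2 hs1 hs2 =>
              simp only [TensorProduct.add_tmul, map_add, hs1, hs2]
      | add s t hs ht => simp only [map_add, hs, ht]
    simp only [LinearMap.comp_apply, LinearEquiv.coe_coe]
    rw [claim1 (YN.coact m)]
    have base := LinearMap.congr_fun YN.hom_coact m
    simp only [LinearMap.comp_apply, LinearEquiv.coe_coe] at base
    rw [base]
    rw [claim2 (YN.coact m)]
  · -- coact_mu
    intro m
    simp only [LinearMap.comp_apply, LinearEquiv.coe_coe]
    rw [YN.coact_mu m]
    generalize YN.coact m = t
    induction t using TensorProduct.induction_on with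
    | zero => simp
    | tmul n0 h0 =>
        simp only [TensorProduct.map_tmul, LinearMap.id_coe, id_eq, LinearEquiv.coe_coe]
        rw [hψauto.map_a]
    | add s t hs ht => simp only [map_add, hs, ht]
  · -- coact_counit
    intro m
    simp only [LinearMap.comp_apply, LinearEquiv.coe_coe]
    have : (TensorProduct.map LinearMap.id HH.counit)
        ((TensorProduct.map LinearMap.id ψ.toLinearMap) (YN.coact m))
        = (TensorProduct.map LinearMap.id HH.counit) (YN.coact m) := by
      generalize YN.coact m = t
      induction t using TensorProduct.induction_on with
      | zero => simp
      | tmul n0 h0 =>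
          simp only [TensorProduct.map_tmul, LinearMap.id_coe, id_eq, LinearEquiv.coe_coe]
          rw [hψauto.map_counit]
      | add s t hs ht => simp only [map_add, hs, ht]
    rw [this]
    exact YN.coact_counit m
  · -- compat
    intro h m n h1 h2 hΔ p h21 h22 hΔ2 q m0 m1 hcoact
    have hΔφ : HH.comul (φ h) = ∑ i, φ (h1 i) ⊗ₜ[k] φ (h2 i) := by
      rw [hφauto.map_comul, hΔ, map_sum]
      simp only [TensorProduct.map_tmul, LinearEquiv.coe_coe]
    have hΔ2φ : ∀ i, HH.comul (φ (h2 i)) = ∑ j, φ (h21 i j) ⊗ₜ[k] φ (h22 i j) := by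
      intro i
      rw [hφauto.map_comul, hΔ2 i, map_sum]
      simp only [TensorProduct.map_tmul, LinearEquiv.coe_coe]
    have cancel : ∀ t : N ⊗[k] H, (TensorProduct.map LinearMap.id ψ.symm.toLinearMap)
        ((TensorProduct.map LinearMap.id ψ.toLinearMap) t) = t := by
      intro t
      induction t using TensorProduct.induction_on with
      | zero => simp
      | tmul p' q' => simp
      | add s t hs ht => simp only [map_add, hs, ht]
    simp only [LinearMap.comp_apply, LinearEquiv.coe_coe] at hcoact ⊢
    have hρm : YN.coact m = ∑ l, m0 l ⊗ₜ[k] ψ.symm (m1 l) := by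
      have h5 := congrArg (TensorProduct.map LinearMap.id ψ.symm.toLinearMap) hcoact
      rw [cancel (YN.coact m), map_sum] at h5
      simpa only [TensorProduct.map_tmul, LinearMap.id_coe, id_eq, LinearEquiv.coe_coe]
        using h5
    have key := YN.compat (φ h) m n (fun i => φ (h1 i)) (fun i => φ (h2 i)) hΔφ
      p (fun i j => φ (h21 i j)) (fun i j => φ (h22 i j)) hΔ2φ
      q m0 (fun l => ψ.symm (m1 l)) hρm
    have h6 := congrArg (TensorProduct.map LinearMap.id ψ.toLinearMap) key
    simp only [map_sum, TensorProduct.map_tmul, LinearMap.id_coe, id_eq,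
      LinearEquiv.coe_coe] at h6
    rw [h6]
    refine Finset.sum_congr rfl fun i _ => Finset.sum_congr rfl fun j _ =>
      Finset.sum_congr rfl fun l _ => ?_
    congr 1
    · rw [hφauto.map_a]
    · rw [hψauto.map_mul, hψauto.map_mul, ← auto_Sinv HH hφauto]
      have e1 : ψ (HH.a.symm (ψ.symm (m1 l))) = HH.a.symm (m1 l) := by
        rw [hψa', ψ.apply_symm_apply]
      rw [e1]
      simp only [hφ, hψ, LinearEquiv.trans_apply, LinearEquiv.apply_symm_apply,
        LinearEquiv.symm_apply_apply]
end
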